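/- arXiv:1605.01793 — 4 statements merged into one kernel-verified Lean document; each statement's English description precedes it below -/
import Mathlib

section
/- Let α₀ > 1 and α ∈ (0,1). Let (p_n)_{n≥1} be nonnegative reals with Σ_{n≥1} p_n = 1 and p_n ≤ C_p·n^{-(1+α₀)} for all n ≥ 1. Let (a_n)_{n≥0} be nonnegative reals with a₀ > 0 and c_a·n^{-α₀} ≤ a_n ≤ C_a·n^{-α₀} for all n ≥ 1, where 0 < c_a ≤ C_a. Define δ₀ = a₀ and recursively δ_n = a_n + α·Σ_{l=1}^{n} p_l·δ_{n−l} for n ≥ 1. Then there exist constants 0 < c₁ ≤ c₂ such that c₁·n^{-α₀} ≤ δ_n ≤ c₂·n^{-α₀} for every integer n ≥ 1. -/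
set_option maxHeartbeats 1000000

lemma tele {s x : ℝ} (hs : 0 < s) (hx : 2 ≤ x) :
    s * x ^ (-(s+1)) ≤ (x-1) ^ (-s) - x ^ (-s) := by
  have hx0 : (0:ℝ) < x := by linarith
  have hx1 : (0:ℝ) < x - 1 := by linarith
  have h2 : 1 - 1/x ≤ Real.exp (-(1/x)) := by
    have := Real.add_one_le_exp (-(1/x)); linarith
  have h3 : (0:ℝ) < 1 - 1/x := by
    rw [sub_pos, div_lt_one hx0]; linarith
  have h1 : Real.exp (1/x) ≤ x / (x-1) := by
    calc Real.exp (1/x) = (Real.exp (-(1/x)))⁻¹ := by rw [← Real.exp_neg, neg_neg]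
    _ ≤ (1 - 1/x)⁻¹ := by
        apply inv_anti₀ h3 h2
    _ = x/(x-1) := by field_simp
  have h4 : 1 + s * (1/x) ≤ (x/(x-1))^s := by
    calc 1 + s*(1/x) = (1/x) * s + 1 := by ring
    _ ≤ Real.exp ((1/x)*s) := Real.add_one_le_exp _
    _ = (Real.exp (1/x))^s := Real.exp_mul _ _
    _ ≤ (x/(x-1))^s := Real.rpow_le_rpow (Real.exp_pos _).le h1 hs.le
  have h5 : (x/(x-1))^s = x^s * (x-1)^(-s) := by
    rw [Real.div_rpow hx0.le hx1.le, Real.rpow_neg hx1.le, div_eq_mul_inv]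
  have h6 : x^(-s) * x^s = 1 := by
    rw [← Real.rpow_add hx0]; simp
  have h7 : x ^ (-(s+1)) = x^(-s) * x⁻¹ := by
    rw [← Real.rpow_neg_one x, ← Real.rpow_add hx0]; ring_nf
  have h8 : x^(-s) * (1 + s * (1/x)) ≤ x^(-s) * (x^s * (x-1)^(-s)) := by
    rw [← h5]
    exact mul_le_mul_of_nonneg_left h4 (Real.rpow_nonneg hx0.le _)
  have h9 : x^(-s) * (x^s * (x-1)^(-s)) = (x-1)^(-s) := by
    rw [← mul_assoc, h6, one_mul]
  rw [h9] at h8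
  have h10 : x^(-s) * (1 + s * (1/x)) = x^(-s) + s * (x^(-s) * x⁻¹) := by
    field_simp
  rw [h10, ← h7] at h8
  linarith

lemma tailsum {s : ℝ} (hs : 0 < s) {m : ℕ} (hm : 1 ≤ m) (n : ℕ) :
    ∑ l ∈ Finset.Ioc m n, (l:ℝ) ^ (-(s+1)) ≤ (m:ℝ)^(-s) / s := by
  rcases le_or_gt n m with h | h
  · rw [Finset.Ioc_eq_empty (by omega)]
    simp
    positivity
  -- prove stronger statement by induction for n ≥ m
  have key : ∀ k : ℕ, m ≤ k → ∑ l ∈ Finset.Ioc m k, (l:ℝ) ^ (-(s+1)) ≤ ((m:ℝ)^(-s) - (k:ℝ)^(-s)) / s := by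
    intro k hk
    induction k with
    | zero => omega
    | succ k ih =>
      rcases Nat.lt_or_ge m (k+1) with h1 | h1
      · have hmk : m ≤ k := by omega
        have step : ((k+1:ℕ):ℝ) ^ (-(s+1)) ≤ (((k:ℕ):ℝ)^(-s) - ((k+1:ℕ):ℝ)^(-s)) / s := by
          have h2 : (2:ℝ) ≤ ((k+1:ℕ):ℝ) := by
            have : (2:ℕ) ≤ k+1 := by omega
            exact_mod_cast this
          have := tele hs h2
          have hx : ((k+1:ℕ):ℝ) - 1 = ((k:ℕ):ℝ) := by push_cast; ring
          rw [hx] at this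
          rw [le_div_iff₀ hs]
          linarith
        rw [Finset.sum_Ioc_succ_top (by omega)]
        have := ih hmk
        calc ∑ l ∈ Finset.Ioc m k, (l:ℝ) ^ (-(s+1)) + ((k+1:ℕ):ℝ)^(-(s+1))
            ≤ ((m:ℝ)^(-s) - ((k:ℕ):ℝ)^(-s))/s + (((k:ℕ):ℝ)^(-s) - ((k+1:ℕ):ℝ)^(-s))/s := by
              push_cast at step ⊢; linarith
          _ = ((m:ℝ)^(-s) - ((k+1:ℕ):ℝ)^(-s))/s := by ring
      · have : m = k+1 := by omega
        subst this
        simp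
    
  calc ∑ l ∈ Finset.Ioc m n, (l:ℝ) ^ (-(s+1)) ≤ ((m:ℝ)^(-s) - (n:ℝ)^(-s)) / s := key n h.le
    _ ≤ (m:ℝ)^(-s)/s := by
        have : (0:ℝ) ≤ (n:ℝ)^(-s) := Real.rpow_nonneg (Nat.cast_nonneg n) _
        have h0 : (0:ℝ) ≤ (n:ℝ)^(-s) := Real.rpow_nonneg (Nat.cast_nonneg n) _
        gcongr
        linarith

lemma Zsum {α₀ : ℝ} (hα₀ : 1 < α₀) (n : ℕ) :
    ∑ k ∈ Finset.Ioc 0 n, (k:ℝ) ^ (-α₀) ≤ 1 + 1/(α₀-1) := by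
  rcases Nat.eq_zero_or_pos n with rfl | hn
  · have : 0 < α₀ - 1 := by linarith
    simp
    positivity
  have hsplit : Finset.Ioc 0 n = insert 1 (Finset.Ioc 1 n) := by
    ext x; simp [Finset.mem_Ioc]; omega
  rw [hsplit, Finset.sum_insert (by simp)]
  have h1 : ((1:ℕ):ℝ) ^ (-α₀) = 1 := by simp
  have hs : 0 < α₀ - 1 := by linarith
  have : ∑ k ∈ Finset.Ioc 1 n, (k:ℝ) ^ (-α₀) ≤ ((1:ℕ):ℝ)^(-(α₀-1)) / (α₀-1) := by
    have := tailsum hs (le_refl 1) n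
    have he : -((α₀-1)+1) = -α₀ := by ring
    rw [he] at this
    exact this
  simp only [Nat.cast_one, Real.one_rpow] at this ⊢
  rw [one_div] at this ⊢
  linarith


lemma reflect_sum (n : ℕ) (f : ℕ → ℝ) :
    ∑ l ∈ Finset.Ioc 0 (n-1), f (n - l) = ∑ k ∈ Finset.Ioc 0 (n-1), f k := by
  refine Finset.sum_nbij' (fun l => n - l) (fun k => n - k) ?_ ?_ ?_ ?_ ?_ <;>
    intro x hx <;> simp only [Finset.mem_Ioc] at hx ⊢ <;> first
      | omega
      | rfl
      | (congr 1; omega)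

/-- Renewal-type recursion estimate: if `Σ_{n≥1} p_n = 1` with `p_n = O(n^{-(1+α₀)})`,
`a_n ≍ n^{-α₀}` with `a₀ > 0`, `α ∈ (0,1)`, and `δ₀ = a₀`,
`δ_n = a_n + α Σ_{l=1}^n p_l δ_{n-l}` for `n ≥ 1`, then `δ_n ≍ n^{-α₀}`. -/
theorem statement2 (α₀ α : ℝ) (hα₀ : 1 < α₀) (hα : α ∈ Set.Ioo (0 : ℝ) 1)
    (p : ℕ → ℝ) (hp : ∀ n, 0 ≤ p n) (hpsum : ∑' n : ℕ, p (n + 1) = 1)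
    (C_p : ℝ) (hCp : 0 < C_p)
    (hpC : ∀ n : ℕ, 1 ≤ n → p n ≤ C_p * (n : ℝ) ^ (-(1 + α₀)))
    (a : ℕ → ℝ) (ha : ∀ n, 0 ≤ a n) (ha0 : 0 < a 0)
    (c_a C_a : ℝ) (hca : 0 < c_a) (hcaCa : c_a ≤ C_a)
    (hal : ∀ n : ℕ, 1 ≤ n → c_a * (n : ℝ) ^ (-α₀) ≤ a n)
    (hau : ∀ n : ℕ, 1 ≤ n → a n ≤ C_a * (n : ℝ) ^ (-α₀))
    (δ : ℕ → ℝ) (hδ0 : δ 0 = a 0)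
    (hδ : ∀ n : ℕ, 1 ≤ n → δ n = a n + α * ∑ l ∈ Finset.Icc 1 n, p l * δ (n - l)) :
    ∃ c₁ c₂ : ℝ, 0 < c₁ ∧ c₁ ≤ c₂ ∧
      ∀ n : ℕ, 1 ≤ n →
        c₁ * (n : ℝ) ^ (-α₀) ≤ δ n ∧ δ n ≤ c₂ * (n : ℝ) ^ (-α₀) := by
  obtain ⟨hα0, hα1⟩ := hα
  have hα₀0 : (0:ℝ) < α₀ := by linarith
  have hαne : α ≠ 0 := ne_of_gt hα0
  have hα₀ne : α₀ ≠ 0 := ne_of_gt hα₀0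
  -- nonnegativity of δ
  have hδnn : ∀ n, 0 ≤ δ n := by
    intro n
    induction n using Nat.strong_induction_on with
    | _ n ih =>
      rcases Nat.eq_zero_or_pos n with rfl | hn
      · rw [hδ0]; exact ha0.le
      · rw [hδ n hn]
        have h1 : 0 ≤ ∑ l ∈ Finset.Icc 1 n, p l * δ (n-l) := by
          apply Finset.sum_nonneg
          intro l hl
          simp only [Finset.mem_Icc] at hl
          exact mul_nonneg (hp l) (ih (n-l) (by omega))
        have h2 := ha n
        exact add_nonneg h2 (mul_nonneg hα0.le h1)
  -- sum nonneg helper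
  have hsum_nn : ∀ n, 1 ≤ n → 0 ≤ ∑ l ∈ Finset.Icc 1 n, p l * δ (n-l) := by
    intro n _
    exact Finset.sum_nonneg fun l _ => mul_nonneg (hp l) (hδnn _)
  -- partial sums of p bounded by 1
  have hpsummable : Summable (fun n : ℕ => p (n+1)) := by
    have h1 : Summable (fun n : ℕ => (n:ℝ) ^ (-(1+α₀))) :=
      Real.summable_nat_rpow.mpr (by linarith)
    have h2 : Summable (fun n : ℕ => ((n+1 : ℕ):ℝ) ^ (-(1+α₀))) :=
      (summable_nat_add_iff 1).mpr h1
    exact Summable.of_nonneg_of_le (fun n => hp _)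
      (fun n => hpC (n+1) (by omega)) (h2.mul_left C_p)
  have pmsum : ∀ M : ℕ, ∑ l ∈ Finset.Icc 1 M, p l ≤ 1 := by
    intro M
    have he : ∑ l ∈ Finset.Icc 1 M, p l = ∑ j ∈ Finset.range M, p (j+1) := by
      refine Finset.sum_nbij' (fun l => l - 1) (fun j => j + 1) ?_ ?_ ?_ ?_ ?_ <;>
        intro x hx <;>
        simp only [Finset.mem_Icc, Finset.mem_range] at hx ⊢ <;> first
          | omega
          | (congr 1; omega)
    rw [he, ← hpsum]
    exact hpsummable.sum_le_tsum (Finset.range M) (fun i _ => hp _)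
  -- constants
  obtain ⟨β, hβdef⟩ : ∃ x : ℝ, x = (1+α)/2 := ⟨_, rfl⟩
  have hβα : α < β := by rw [hβdef]; linarith
  have hβ1 : β < 1 := by rw [hβdef]; linarith
  have hβ0 : 0 < β := by rw [hβdef]; linarith
  obtain ⟨q, hqdef⟩ : ∃ x : ℝ, x = (α/β) ^ (α₀⁻¹) := ⟨_, rfl⟩
  have hαβpos : 0 < α/β := by positivity
  have hq0 : 0 < q := by
    rw [hqdef]; exact Real.rpow_pos_of_pos hαβpos _
  have hq1 : q < 1 := by
    rw [hqdef]
    exact Real.rpow_lt_one hαβpos.le ((div_lt_one hβ0).mpr hβα) (by positivity)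
  have hq_pow : q ^ α₀ = α/β := by
    rw [hqdef, ← Real.rpow_mul hαβpos.le, inv_mul_cancel₀ hα₀ne, Real.rpow_one]
  have hq_neg : q ^ (-α₀) = β/α := by
    rw [Real.rpow_neg hq0.le, hq_pow, inv_div]
  obtain ⟨Z, hZdef⟩ : ∃ x : ℝ, x = 1 + 1/(α₀-1) := ⟨_, rfl⟩
  have hZ0 : 0 < Z := by
    have h : 0 < α₀ - 1 := by linarith
    rw [hZdef]; positivity
  have h2α₀ : (0:ℝ) < (2:ℝ)^α₀ := Real.rpow_pos_of_pos two_pos _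
  obtain ⟨ε₁, hε₁def⟩ : ∃ x : ℝ, x = (1-β)*α₀ / (4*α*C_p*(2:ℝ)^α₀) := ⟨_, rfl⟩
  have hε₁0 : 0 < ε₁ := by
    have h : 0 < 1 - β := by linarith
    rw [hε₁def]; positivity
  -- choice of m
  obtain ⟨m, hmdef⟩ : ∃ x : ℕ, x = ⌈(ε₁⁻¹) ^ (α₀⁻¹)⌉₊ + 1 := ⟨_, rfl⟩
  have hm1 : 1 ≤ m := by omega
  have hmε : (m:ℝ) ^ (-α₀) ≤ ε₁ := by
    have hle : (ε₁⁻¹) ^ (α₀⁻¹) ≤ (m:ℝ) := by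
      have := Nat.le_ceil ((ε₁⁻¹) ^ (α₀⁻¹))
      rw [hmdef]; push_cast; linarith only [this]
    have h1 : ε₁⁻¹ ≤ (m:ℝ) ^ α₀ := by
      calc ε₁⁻¹ = ((ε₁⁻¹ ^ (α₀⁻¹)) : ℝ) ^ α₀ := by
            rw [← Real.rpow_mul (by positivity), inv_mul_cancel₀ hα₀ne, Real.rpow_one]
        _ ≤ (m:ℝ) ^ α₀ := Real.rpow_le_rpow (by positivity) hle hα₀0.le
    calc (m:ℝ) ^ (-α₀) = ((m:ℝ) ^ α₀)⁻¹ := by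
          rw [Real.rpow_neg (Nat.cast_nonneg m)]
      _ ≤ (ε₁⁻¹)⁻¹ := by
          apply inv_anti₀ (by positivity) h1
      _ = ε₁ := inv_inv ε₁
  -- choice of N
  obtain ⟨D, hDdef⟩ : ∃ x : ℝ, x = 4*α*C_p*(2:ℝ)^(1+α₀)*Z/(1-β) := ⟨_, rfl⟩
  have h2α₀' : (0:ℝ) < (2:ℝ)^(1+α₀) := Real.rpow_pos_of_pos two_pos _
  have hD0 : 0 < D := by
    have h : 0 < 1 - β := by linarith
    rw [hDdef]; positivity
  obtain ⟨N, hNdef⟩ : ∃ x : ℕ, x = ⌈max (((m:ℝ)+1)/(1-q)) D⌉₊ + m + 1 := ⟨_, rfl⟩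
  have hNm : m + 1 ≤ N := by omega
  have hNR : max (((m:ℝ)+1)/(1-q)) D ≤ (N:ℝ) := by
    have h := Nat.le_ceil (max (((m:ℝ)+1)/(1-q)) D)
    have h2 : (⌈max (((m:ℝ)+1)/(1-q)) D⌉₊ : ℕ) ≤ N := by rw [hNdef]; omega
    have h3 : ((⌈max (((m:ℝ)+1)/(1-q)) D⌉₊ : ℕ) : ℝ) ≤ (N:ℝ) := Nat.cast_le.mpr h2
    linarith
  have hN1 : ((m:ℝ)+1)/(1-q) ≤ (N:ℝ) := le_trans (le_max_left _ _) hNR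
  have hN2 : D ≤ (N:ℝ) := le_trans (le_max_right _ _) hNR
  -- the constant c₂
  obtain ⟨A, hAdef⟩ : ∃ x : ℝ, x = 2*(C_a + α*C_p*(a 0))/(1-β) := ⟨_, rfl⟩
  have hA0 : 0 < A := by
    rw [hAdef]
    have h1 : 0 < 1 - β := by linarith
    have h2 : 0 < C_a := lt_of_lt_of_le hca hcaCa
    positivity
  obtain ⟨c₂, hc₂def⟩ : ∃ x : ℝ, x = c_a + A + ∑ k ∈ Finset.Icc 1 (N-1), δ k * (k:ℝ)^α₀ := ⟨_, rfl⟩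
  have hsum_nn2 : 0 ≤ ∑ k ∈ Finset.Icc 1 (N-1), δ k * (k:ℝ)^α₀ :=
    Finset.sum_nonneg fun k _ => mul_nonneg (hδnn k) (Real.rpow_nonneg (Nat.cast_nonneg k) _)
  have hc₂ca : c_a ≤ c₂ := by rw [hc₂def]; linarith
  have hc₂A : A ≤ c₂ := by rw [hc₂def]; linarith
  have hc₂0 : 0 < c₂ := lt_of_lt_of_le hca hc₂ca
  have hfin : C_a + α*C_p*(a 0) ≤ (1-β)/2 * c₂ := by
    have h1 : 0 < 1 - β := by linarith
    have h1' : (1-β) ≠ 0 := ne_of_gt h1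
    have h2 : (1-β)/2 * A = C_a + α*C_p*(a 0) := by
      rw [hAdef]; field_simp
    have h3 : (1-β)/2 * A ≤ (1-β)/2 * c₂ := mul_le_mul_of_nonneg_left hc₂A (by linarith)
    linarith
  -- base cases
  have hbase : ∀ k : ℕ, 1 ≤ k → k < N → δ k ≤ c₂ * (k:ℝ)^(-α₀) := by
    intro k hk1 hkN
    have hkpos : (0:ℝ) < (k:ℝ) := by exact_mod_cast hk1
    have hmem : k ∈ Finset.Icc 1 (N-1) := Finset.mem_Icc.mpr (by omega)
    have h1 : δ k * (k:ℝ)^α₀ ≤ ∑ i ∈ Finset.Icc 1 (N-1), δ i * (i:ℝ)^α₀ :=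
      Finset.single_le_sum
        (fun i _ => mul_nonneg (hδnn i) (Real.rpow_nonneg (Nat.cast_nonneg i) _)) hmem
    have h2 : δ k * (k:ℝ)^α₀ ≤ c₂ := by rw [hc₂def]; linarith
    have h3 : (k:ℝ)^α₀ * (k:ℝ)^(-α₀) = 1 := by
      rw [← Real.rpow_add hkpos]; simp
    calc δ k = δ k * ((k:ℝ)^α₀ * (k:ℝ)^(-α₀)) := by rw [h3, mul_one]
      _ = (δ k * (k:ℝ)^α₀) * (k:ℝ)^(-α₀) := by ring
      _ ≤ c₂ * (k:ℝ)^(-α₀) :=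
          mul_le_mul_of_nonneg_right h2 (Real.rpow_nonneg hkpos.le _)
  -- the main upper bound
  have upper : ∀ n : ℕ, 1 ≤ n → δ n ≤ c₂ * (n:ℝ)^(-α₀) := by
    intro n
    induction n using Nat.strong_induction_on with
    | _ n ih =>
    intro hn1
    rcases Nat.lt_or_ge n N with hnN | hnN
    · exact hbase n hn1 hnN
    -- main step
    have hnm : m + 1 ≤ n := le_trans hNm hnN
    have hnR : (0:ℝ) < (n:ℝ) := by
      have : (0:ℕ) < n := by omega
      exact_mod_cast this
    have hnNR : (N:ℝ) ≤ (n:ℝ) := by exact_mod_cast hnN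
    set X : ℝ := (n:ℝ)^(-α₀) with hXdef
    have hX0 : 0 < X := Real.rpow_pos_of_pos hnR _
    set F : ℕ → ℝ := fun l => p l * δ (n - l) with hFdef
    have hFnn : ∀ l, 0 ≤ F l := fun l => mul_nonneg (hp l) (hδnn _)
    -- splitting
    have d1 : (∑ l ∈ Finset.Ioc 0 m, F l) + (∑ l ∈ Finset.Ioc m n, F l)
        = ∑ l ∈ Finset.Ioc 0 n, F l :=
      Finset.sum_Ioc_consecutive _ (Nat.zero_le m) (by omega)
    have d2 : (∑ l ∈ Finset.Ioc m (n-1), F l) + (∑ l ∈ Finset.Ioc (n-1) n, F l)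
        = ∑ l ∈ Finset.Ioc m n, F l :=
      Finset.sum_Ioc_consecutive _ (by omega) (by omega)
    have d3 : Finset.Ioc (n-1) n = {n} := by
      ext x; simp only [Finset.mem_Ioc, Finset.mem_singleton]; omega
    have d4 : ∑ l ∈ (Finset.Ioc m (n-1)).filter (fun l => 2*l ≤ n), F l
        + ∑ l ∈ (Finset.Ioc m (n-1)).filter (fun l => ¬ 2*l ≤ n), F l
        = ∑ l ∈ Finset.Ioc m (n-1), F l :=
      Finset.sum_filter_add_sum_filter_not _ _ _
    have hIcc : Finset.Icc 1 n = Finset.Ioc 0 n := Finset.Icc_add_one_left_eq_Ioc 0 n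
    -- bound B1
    have hqn : q * (n:ℝ) ≤ (n:ℝ) - (m:ℝ) := by
      have h1 : 0 < 1 - q := by linarith
      have h2 : ((m:ℝ)+1) ≤ (N:ℝ) * (1-q) := by
        rw [div_le_iff₀ h1] at hN1
        linarith only [hN1]
      have h3 : (N:ℝ)*(1-q) ≤ (n:ℝ)*(1-q) := mul_le_mul_of_nonneg_right hnNR h1.le
      linarith only [h2, h3]
    have hnm0 : (0:ℝ) < (n:ℝ) - (m:ℝ) := by
      have h := mul_pos hq0 hnR; linarith only [h, hqn]
    have hB1 : ∑ l ∈ Finset.Ioc 0 m, F l ≤ (β/α) * c₂ * X := by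
      have step : ∀ l ∈ Finset.Ioc 0 m, F l ≤ p l * (c₂ * ((n:ℝ)-(m:ℝ))^(-α₀)) := by
        intro l hl
        simp only [Finset.mem_Ioc] at hl
        have hl1 : 1 ≤ l := hl.1
        have hlm : l ≤ m := hl.2
        have hnl1 : 1 ≤ n - l := by omega
        have hnlcast : ((n - l : ℕ):ℝ) = (n:ℝ) - (l:ℝ) := by
          rw [Nat.cast_sub (by omega)]
        have h1 : δ (n-l) ≤ c₂ * ((n-l:ℕ):ℝ)^(-α₀) := ih (n-l) (by omega) hnl1
        have h2 : ((n-l:ℕ):ℝ)^(-α₀) ≤ ((n:ℝ)-(m:ℝ))^(-α₀) := by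
          apply Real.rpow_le_rpow_of_nonpos hnm0 ?_ (by linarith only [hα₀0])
          rw [hnlcast]
          have : (l:ℝ) ≤ (m:ℝ) := by exact_mod_cast hlm
          linarith only [this]
        have h3 : δ (n-l) ≤ c₂ * ((n:ℝ)-(m:ℝ))^(-α₀) := by
          calc δ (n-l) ≤ c₂ * ((n-l:ℕ):ℝ)^(-α₀) := h1
            _ ≤ c₂ * ((n:ℝ)-(m:ℝ))^(-α₀) := mul_le_mul_of_nonneg_left h2 hc₂0.le
        exact mul_le_mul_of_nonneg_left h3 (hp l)
      calc ∑ l ∈ Finset.Ioc 0 m, F l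
          ≤ ∑ l ∈ Finset.Ioc 0 m, p l * (c₂ * ((n:ℝ)-(m:ℝ))^(-α₀)) :=
            Finset.sum_le_sum step
        _ = (∑ l ∈ Finset.Ioc 0 m, p l) * (c₂ * ((n:ℝ)-(m:ℝ))^(-α₀)) :=
            (Finset.sum_mul _ _ _).symm
        _ ≤ 1 * (c₂ * ((n:ℝ)-(m:ℝ))^(-α₀)) := by
            apply mul_le_mul_of_nonneg_right ?_ (by positivity)
            rw [← Finset.Icc_add_one_left_eq_Ioc 0 m]
            exact pmsum m
        _ = c₂ * ((n:ℝ)-(m:ℝ))^(-α₀) := one_mul _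
        _ ≤ c₂ * ((β/α) * X) := by
            apply mul_le_mul_of_nonneg_left ?_ hc₂0.le
            calc ((n:ℝ)-(m:ℝ))^(-α₀) ≤ (q * (n:ℝ))^(-α₀) :=
                  Real.rpow_le_rpow_of_nonpos (by positivity) hqn (by linarith only [hα₀0])
              _ = q^(-α₀) * X := Real.mul_rpow hq0.le hnR.le
              _ = (β/α) * X := by rw [hq_neg]
        _ = (β/α) * c₂ * X := by ring
    -- bound B2
    have hB2 : ∑ l ∈ (Finset.Ioc m (n-1)).filter (fun l => 2*l ≤ n), F l
        ≤ ((1-β)/(4*α)) * c₂ * X := by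
      have step : ∀ l ∈ (Finset.Ioc m (n-1)).filter (fun l => 2*l ≤ n),
          F l ≤ (l:ℝ)^(-(1+α₀)) * (C_p * (c₂ * ((2:ℝ)^α₀ * X))) := by
        intro l hl
        simp only [Finset.mem_filter, Finset.mem_Ioc] at hl
        obtain ⟨⟨hml, hln⟩, h2l⟩ := hl
        have hl1 : 1 ≤ l := by omega
        have hnl1 : 1 ≤ n - l := by omega
        have hnlcast : ((n - l : ℕ):ℝ) = (n:ℝ) - (l:ℝ) := by
          rw [Nat.cast_sub (by omega)]
        have hhalf : (n:ℝ)/2 ≤ ((n-l:ℕ):ℝ) := by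
          rw [hnlcast]
          have : ((2*l:ℕ):ℝ) ≤ (n:ℝ) := by exact_mod_cast h2l
          push_cast at this
          linarith only [this]
        have h1 : δ (n-l) ≤ c₂ * ((n-l:ℕ):ℝ)^(-α₀) := ih (n-l) (by omega) hnl1
        have h2 : ((n-l:ℕ):ℝ)^(-α₀) ≤ ((n:ℝ)/2)^(-α₀) :=
          Real.rpow_le_rpow_of_nonpos (by positivity) hhalf (by linarith only [hα₀0])
        have h3 : ((n:ℝ)/2)^(-α₀) = (2:ℝ)^α₀ * X := by
          rw [Real.div_rpow hnR.le (by norm_num), Real.rpow_neg (by norm_num : (0:ℝ) ≤ 2),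
            div_inv_eq_mul, mul_comm]
        have h4 : δ (n-l) ≤ c₂ * ((2:ℝ)^α₀ * X) := by
          calc δ (n-l) ≤ c₂ * ((n-l:ℕ):ℝ)^(-α₀) := h1
            _ ≤ c₂ * ((n:ℝ)/2)^(-α₀) := mul_le_mul_of_nonneg_left h2 hc₂0.le
            _ = c₂ * ((2:ℝ)^α₀ * X) := by rw [h3]
        calc F l = p l * δ (n-l) := rfl
          _ ≤ (C_p * (l:ℝ)^(-(1+α₀))) * (c₂ * ((2:ℝ)^α₀ * X)) :=
              mul_le_mul (hpC l hl1) h4 (hδnn _) (by positivity)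
          _ = (l:ℝ)^(-(1+α₀)) * (C_p * (c₂ * ((2:ℝ)^α₀ * X))) := by ring
      calc ∑ l ∈ (Finset.Ioc m (n-1)).filter (fun l => 2*l ≤ n), F l
          ≤ ∑ l ∈ (Finset.Ioc m (n-1)).filter (fun l => 2*l ≤ n),
              (l:ℝ)^(-(1+α₀)) * (C_p * (c₂ * ((2:ℝ)^α₀ * X))) := Finset.sum_le_sum step
        _ = (∑ l ∈ (Finset.Ioc m (n-1)).filter (fun l => 2*l ≤ n), (l:ℝ)^(-(1+α₀)))
              * (C_p * (c₂ * ((2:ℝ)^α₀ * X))) := (Finset.sum_mul _ _ _).symm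
        _ ≤ ((m:ℝ)^(-α₀)/α₀) * (C_p * (c₂ * ((2:ℝ)^α₀ * X))) := by
            apply mul_le_mul_of_nonneg_right ?_ (by positivity)
            calc ∑ l ∈ (Finset.Ioc m (n-1)).filter (fun l => 2*l ≤ n), (l:ℝ)^(-(1+α₀))
                ≤ ∑ l ∈ Finset.Ioc m (n-1), (l:ℝ)^(-(1+α₀)) := by
                  apply Finset.sum_le_sum_of_subset_of_nonneg (Finset.filter_subset _ _)
                  intro i _ _
                  positivity
              _ ≤ (m:ℝ)^(-α₀)/α₀ := by
                  have := tailsum hα₀0 hm1 (n-1)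
                  have he : -(α₀+1) = -(1+α₀) := by ring
                  rw [he] at this
                  exact this
        _ ≤ ε₁/α₀ * (C_p * (c₂ * ((2:ℝ)^α₀ * X))) := by
            apply mul_le_mul_of_nonneg_right ?_ (by positivity)
            gcongr
        _ = ((1-β)/(4*α)) * c₂ * X := by
            rw [hε₁def]
            field_simp
    -- bound B3
    have hB3 : ∑ l ∈ (Finset.Ioc m (n-1)).filter (fun l => ¬ 2*l ≤ n), F l
        ≤ ((1-β)/(4*α)) * c₂ * X := by
      set K3 : ℝ := C_p * (2:ℝ)^(1+α₀) * (n:ℝ)^(-(1+α₀)) * c₂ with hK3def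
      have hK30 : 0 ≤ K3 := by rw [hK3def]; positivity
      have step : ∀ l ∈ (Finset.Ioc m (n-1)).filter (fun l => ¬ 2*l ≤ n),
          F l ≤ K3 * ((n-l:ℕ):ℝ)^(-α₀) := by
        intro l hl
        simp only [Finset.mem_filter, Finset.mem_Ioc, not_le] at hl
        obtain ⟨⟨hml, hln⟩, h2l⟩ := hl
        have hl1 : 1 ≤ l := by omega
        have hnl1 : 1 ≤ n - l := by omega
        have hhalf : (n:ℝ)/2 ≤ (l:ℝ) := by
          have : (n:ℝ) < ((2*l:ℕ):ℝ) := by exact_mod_cast h2l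
          push_cast at this
          linarith only [this]
        have h1 : p l ≤ C_p * (2:ℝ)^(1+α₀) * (n:ℝ)^(-(1+α₀)) := by
          have h2 : (l:ℝ)^(-(1+α₀)) ≤ ((n:ℝ)/2)^(-(1+α₀)) :=
            Real.rpow_le_rpow_of_nonpos (by positivity) hhalf (by linarith only [hα₀0, hα1])
          have h3 : ((n:ℝ)/2)^(-(1+α₀)) = (2:ℝ)^(1+α₀) * (n:ℝ)^(-(1+α₀)) := by
            rw [Real.div_rpow hnR.le (by norm_num),
              Real.rpow_neg (by norm_num : (0:ℝ) ≤ 2), div_inv_eq_mul, mul_comm]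
          calc p l ≤ C_p * (l:ℝ)^(-(1+α₀)) := hpC l hl1
            _ ≤ C_p * ((n:ℝ)/2)^(-(1+α₀)) := mul_le_mul_of_nonneg_left h2 hCp.le
            _ = C_p * (2:ℝ)^(1+α₀) * (n:ℝ)^(-(1+α₀)) := by rw [h3]; ring
        have h4 : δ (n-l) ≤ c₂ * ((n-l:ℕ):ℝ)^(-α₀) := ih (n-l) (by omega) hnl1
        calc F l = p l * δ (n-l) := rfl
          _ ≤ (C_p * (2:ℝ)^(1+α₀) * (n:ℝ)^(-(1+α₀))) * (c₂ * ((n-l:ℕ):ℝ)^(-α₀)) :=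
              mul_le_mul h1 h4 (hδnn _) (by positivity)
          _ = K3 * ((n-l:ℕ):ℝ)^(-α₀) := by rw [hK3def]; ring
      have hsub : (Finset.Ioc m (n-1)).filter (fun l => ¬ 2*l ≤ n) ⊆ Finset.Ioc 0 (n-1) := by
        intro x hx
        simp only [Finset.mem_filter, Finset.mem_Ioc] at hx ⊢
        omega
      calc ∑ l ∈ (Finset.Ioc m (n-1)).filter (fun l => ¬ 2*l ≤ n), F l
          ≤ ∑ l ∈ (Finset.Ioc m (n-1)).filter (fun l => ¬ 2*l ≤ n),
              K3 * ((n-l:ℕ):ℝ)^(-α₀) := Finset.sum_le_sum step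
        _ ≤ ∑ l ∈ Finset.Ioc 0 (n-1), K3 * ((n-l:ℕ):ℝ)^(-α₀) := by
            apply Finset.sum_le_sum_of_subset_of_nonneg hsub
            intro i _ _
            positivity
        _ = K3 * ∑ l ∈ Finset.Ioc 0 (n-1), ((n-l:ℕ):ℝ)^(-α₀) := by
            rw [Finset.mul_sum]
        _ = K3 * ∑ k ∈ Finset.Ioc 0 (n-1), ((k:ℕ):ℝ)^(-α₀) := by
            rw [reflect_sum n (fun j => ((j:ℕ):ℝ)^(-α₀))]
        _ ≤ K3 * Z := by
            apply mul_le_mul_of_nonneg_left ?_ hK30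
            rw [hZdef]
            exact Zsum hα₀ (n-1)
        _ ≤ ((1-β)/(4*α)) * c₂ * X := by
            rw [hK3def]
            have hnsplit : (n:ℝ)^(-(1+α₀)) = (n:ℝ)⁻¹ * X := by
              rw [hXdef, show -(1+α₀) = (-1) + (-α₀) by ring, Real.rpow_add hnR,
                Real.rpow_neg_one]
            rw [hnsplit]
            have hkey : C_p * (2:ℝ)^(1+α₀) * Z * (n:ℝ)⁻¹ ≤ (1-β)/(4*α) := by
              have hβ' : 0 < 1 - β := by linarith only [hβ1]
              have hDn : D ≤ (n:ℝ) := le_trans hN2 hnNR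
              rw [hDdef, div_le_iff₀ hβ'] at hDn
              rw [mul_inv_le_iff₀ hnR]
              calc C_p * (2:ℝ)^(1+α₀) * Z ≤ (n:ℝ) * (1-β) / (4*α) := by
                    rw [le_div_iff₀ (by positivity)]
                    linarith only [hDn]
                _ = (1-β)/(4*α) * (n:ℝ) := by ring
            calc C_p * (2:ℝ)^(1+α₀) * ((n:ℝ)⁻¹ * X) * c₂ * Z
                = (C_p * (2:ℝ)^(1+α₀) * Z * (n:ℝ)⁻¹) * (c₂ * X) := by ring
              _ ≤ ((1-β)/(4*α)) * (c₂ * X) :=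
                  mul_le_mul_of_nonneg_right hkey (by positivity)
              _ = ((1-β)/(4*α)) * c₂ * X := by ring
    -- bound B4
    have hB4 : F n ≤ C_p * (a 0) * X := by
      have h1 : F n = p n * a 0 := by
        rw [hFdef]; simp [Nat.sub_self, hδ0]
      have h2 : (n:ℝ)^(-(1+α₀)) ≤ X := by
        rw [hXdef, show -(1+α₀) = (-1) + (-α₀) by ring, Real.rpow_add hnR,
          Real.rpow_neg_one]
        have hn1' : (1:ℝ) ≤ (n:ℝ) := by exact_mod_cast hn1
        have : (n:ℝ)⁻¹ ≤ 1 := by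
          rw [inv_le_one_iff₀]; right; exact hn1'
        exact mul_le_of_le_one_left (Real.rpow_nonneg hnR.le _) this
      calc F n = p n * a 0 := h1
        _ ≤ (C_p * (n:ℝ)^(-(1+α₀))) * a 0 :=
            mul_le_mul_of_nonneg_right (hpC n hn1) ha0.le
        _ ≤ (C_p * X) * a 0 := by
            apply mul_le_mul_of_nonneg_right ?_ ha0.le
            exact mul_le_mul_of_nonneg_left h2 hCp.le
        _ = C_p * (a 0) * X := by ring
    -- assemble
    have hS : ∑ l ∈ Finset.Icc 1 n, F l
        ≤ (β/α) * c₂ * X + (((1-β)/(4*α)) * c₂ * X + ((1-β)/(4*α)) * c₂ * X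
            + C_p * (a 0) * X) := by
      rw [hIcc, ← d1, ← d2, d3, Finset.sum_singleton, ← d4]
      have h := add_le_add (add_le_add hB2 hB3) hB4
      linarith only [h, hB1]
    have hfinX : (C_a + α*C_p*(a 0)) * X ≤ ((1-β)/2*c₂) * X :=
      mul_le_mul_of_nonneg_right hfin hX0.le
    calc δ n = a n + α * ∑ l ∈ Finset.Icc 1 n, F l := hδ n hn1
      _ ≤ C_a * X + α * ((β/α) * c₂ * X + (((1-β)/(4*α)) * c₂ * X
            + ((1-β)/(4*α)) * c₂ * X + C_p * (a 0) * X)) :=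
          add_le_add (hau n hn1) (mul_le_mul_of_nonneg_left hS hα0.le)
      _ = (C_a + α*C_p*(a 0)) * X + (β * c₂ * X + ((1-β)/2) * c₂ * X) := by
          field_simp
          ring
      _ ≤ ((1-β)/2*c₂) * X + (β * c₂ * X + ((1-β)/2) * c₂ * X) := by
          linarith only [hfinX]
      _ = c₂ * X := by ring
  -- conclusion
  refine ⟨c_a, c₂, hca, hc₂ca, ?_⟩
  intro n hn
  constructor
  · have h1 := hal n hn
    have h2 := hsum_nn n hn
    have h3 := mul_nonneg hα0.le h2
    rw [hδ n hn]
    linarith only [h1, h3]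
  · exact upper n hn
end

section
/- Let α ∈ (0,1), α₀ > 1, and let (p_n)_{n≥1} be nonnegative reals with Σ_{n≥1} p_n = 1 and p_n ≤ C·n^{-(1+α₀)} for all n ≥ 1. Define q₀ = 1 and q_n = α·Σ_{k=0}^{n−1} p_{n−k}·q_k for n ≥ 1 (so the q_n are the Taylor coefficients of (1 − α·p(z))^{-1}). Then q_n ≥ α·p_n ≥ 0 for every n ≥ 1, Σ_{n≥0} q_n = 1/(1−α), and there exists a constant C₁ > 0 such that q_n ≤ C₁·n^{-(1+α₀)} for every n ≥ 1. -/
open Finset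

/-- Double sum swap for convolution-type sums. -/
lemma aux_swap4 (a : ℕ → ℕ → ℝ) (N : ℕ) :
    ∑ m ∈ range N, ∑ j ∈ range (m+1), a j (m-j)
      = ∑ j ∈ range N, ∑ i ∈ range (N-j), a j i := by
  induction N with
  | zero => simp
  | succ N ih =>
    rw [Finset.sum_range_succ, ih, Finset.sum_range_succ]
    have h1 : ∀ j ∈ range N, ∑ i ∈ range (N+1-j), a j i
        = ∑ i ∈ range (N-j), a j i + a j (N-j) := by
      intro j hj
      have hjN : j ≤ N := (Finset.mem_range.mp hj).le
      rw [show N+1-j = (N-j)+1 by omega, Finset.sum_range_succ]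
    have hRHS : ∑ j ∈ range (N+1), ∑ i ∈ range (N+1-j), a j i
        = (∑ j ∈ range N, ∑ i ∈ range (N-j), a j i)
          + (∑ j ∈ range N, a j (N-j) + a N 0) := by
      rw [Finset.sum_range_succ, Finset.sum_congr rfl h1, Finset.sum_add_distrib]
      have hN : N + 1 - N = 1 := by omega
      rw [hN, Finset.sum_range_one]
      ring
    rw [hRHS]
    simp [Nat.sub_self]

set_option maxHeartbeats 1600000 in
/-- Taylor coefficients of `(1 - α·p(z))⁻¹`: if `Σ_{n≥1} p_n = 1`, `p_n ≤ C n^{-(1+α₀)}`,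
`α ∈ (0,1)`, `q₀ = 1` and `q_n = α Σ_{k=0}^{n-1} p_{n-k} q_k`, then `q_n ≥ α p_n ≥ 0`,
`Σ q_n = 1/(1-α)`, and `q_n ≤ C₁ n^{-(1+α₀)}` for some `C₁ > 0`. -/
theorem statement4 (α α₀ : ℝ) (hα : α ∈ Set.Ioo (0 : ℝ) 1) (hα₀ : 1 < α₀)
    (p : ℕ → ℝ) (hp : ∀ n, 0 ≤ p n) (hsum : ∑' n : ℕ, p (n + 1) = 1)
    (C : ℝ) (hC : 0 < C)
    (hpC : ∀ n : ℕ, 1 ≤ n → p n ≤ C * (n : ℝ) ^ (-(1 + α₀)))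
    (q : ℕ → ℝ) (hq0 : q 0 = 1)
    (hq : ∀ n : ℕ, 1 ≤ n → q n = α * ∑ k ∈ Finset.range n, p (n - k) * q k) :
    (∀ n : ℕ, 1 ≤ n → 0 ≤ α * p n ∧ α * p n ≤ q n) ∧
    (∑' n : ℕ, q n = 1 / (1 - α)) ∧
    ∃ C₁ : ℝ, 0 < C₁ ∧ ∀ n : ℕ, 1 ≤ n → q n ≤ C₁ * (n : ℝ) ^ (-(1 + α₀)) := by
  obtain ⟨hα0, hα1⟩ := hα
  have h1α : 0 < 1 - α := by linarith
  -- summability of p(·+1)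
  have hsummp : Summable (fun n => p (n+1)) := by
    by_contra h
    rw [tsum_eq_zero_of_not_summable h] at hsum
    norm_num at hsum
  -- q is nonnegative
  have hqnn : ∀ n, 0 ≤ q n := by
    intro n
    induction n using Nat.strong_induction_on with
    | _ n ih =>
      rcases Nat.eq_zero_or_pos n with h | h
      · simp [h, hq0]
      · rw [hq n h]
        refine mul_nonneg hα0.le (Finset.sum_nonneg fun k hk => ?_)
        exact mul_nonneg (hp _) (ih k (Finset.mem_range.mp hk))
  -- partial sums of p are ≤ 1
  have hPle : ∀ N, ∑ j ∈ range N, p (j+1) ≤ 1 := by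
    intro N
    rw [← hsum]
    exact hsummp.sum_le_tsum _ (fun i _ => hp _)
  have hPnn : ∀ N, 0 ≤ ∑ j ∈ range N, p (j+1) := fun N =>
    Finset.sum_nonneg fun i _ => hp _
  -- reflected recursion
  have hqr : ∀ m : ℕ, q (m+1) = α * ∑ j ∈ range (m+1), p (j+1) * q (m - j) := by
    intro m
    rw [hq (m+1) (Nat.le_add_left 1 m)]
    congr 1
    rw [← Finset.sum_range_reflect (fun k => p (m+1-k) * q k) (m+1)]
    refine Finset.sum_congr rfl fun j hj => ?_
    have hj' : j ≤ m := Nat.lt_succ_iff.mp (Finset.mem_range.mp hj)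
    have h1 : m + 1 - (m - j) = j + 1 := by omega
    have h2 : m + 1 - 1 - j = m - j := by omega
    rw [h2, h1]
  -- key identity for partial sums
  have hkey : ∀ N, ∑ n ∈ range (N+1), q n
      = 1 + α * ∑ j ∈ range N, p (j+1) * ∑ i ∈ range (N-j), q i := by
    intro N
    rw [Finset.sum_range_succ', hq0]
    have h1 : ∑ m ∈ range N, q (m+1)
        = α * ∑ m ∈ range N, ∑ j ∈ range (m+1), p (j+1) * q (m-j) := by
      rw [Finset.mul_sum]
      exact Finset.sum_congr rfl fun m _ => hqr m
    rw [h1, aux_swap4 (fun j i => p (j+1) * q i) N]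
    have h2 : ∀ j ∈ range N, ∑ i ∈ range (N-j), p (j+1) * q i
        = p (j+1) * ∑ i ∈ range (N-j), q i := fun j _ => (Finset.mul_sum _ _ _).symm
    rw [Finset.sum_congr rfl h2]
    ring
  -- partial sums of q bounded by 1/(1-α)
  have hTmono : ∀ {M N : ℕ}, M ≤ N → ∑ i ∈ range M, q i ≤ ∑ i ∈ range N, q i := by
    intro M N hMN
    exact Finset.sum_le_sum_of_subset_of_nonneg
      (Finset.range_subset_range.mpr hMN) (fun i _ _ => hqnn i)
  have hTle : ∀ N, ∑ i ∈ range N, q i ≤ 1/(1-α) := by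
    intro N
    rcases Nat.eq_zero_or_pos N with h | h
    · simp only [h, range_zero, Finset.sum_empty]
      positivity
    · obtain ⟨M, rfl⟩ := Nat.exists_eq_add_of_le h
      rw [add_comm] at *
      have hB : (0:ℝ) ≤ ∑ i ∈ range (M+1), q i := Finset.sum_nonneg fun i _ => hqnn i
      have h3 : ∑ n ∈ range (M+1), q n
          ≤ 1 + α * ((∑ j ∈ range M, p (j+1)) * ∑ i ∈ range (M+1), q i) := by
        conv_lhs => rw [hkey M]
        have h4 : ∑ j ∈ range M, p (j+1) * ∑ i ∈ range (M-j), q i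
            ≤ ∑ j ∈ range M, p (j+1) * ∑ i ∈ range (M+1), q i := by
          refine Finset.sum_le_sum fun j _ => ?_
          exact mul_le_mul_of_nonneg_left (hTmono (by omega)) (hp _)
        have h5 : ∑ j ∈ range M, p (j+1) * ∑ i ∈ range (M+1), q i
            = (∑ j ∈ range M, p (j+1)) * ∑ i ∈ range (M+1), q i := by
          rw [← Finset.sum_mul]
        rw [← h5]
        nlinarith [mul_le_mul_of_nonneg_left h4 hα0.le]
      rw [le_div_iff₀ h1α]
      nlinarith [h3, mul_le_mul_of_nonneg_right (hPle M) hB, hα0]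
  -- summability of q
  have hsummq : Summable q := summable_of_sum_range_le hqnn hTle
  have hQle : ∑' n, q n ≤ 1/(1-α) := hsummq.tsum_le_of_sum_range_le hTle
  -- lower bound for the sum
  have hPtend : Filter.Tendsto (fun N => ∑ j ∈ range N, p (j+1)) Filter.atTop (nhds 1) := by
    have := hsummp.hasSum.tendsto_sum_nat
    rwa [hsum] at this
  have hTtend : Filter.Tendsto (fun N => ∑ i ∈ range N, q i) Filter.atTop (nhds (∑' n, q n)) :=
    hsummq.hasSum.tendsto_sum_nat
  have hQge : 1 + α * ∑' n, q n ≤ ∑' n, q n := by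
    have hstep : ∀ M, 1 + α * ((∑ j ∈ range M, p (j+1)) * ∑ i ∈ range M, q i) ≤ ∑' n, q n := by
      intro M
      have h1 : ∑ n ∈ range (2*M+1), q n ≤ ∑' n, q n :=
        hsummq.sum_le_tsum _ (fun i _ => hqnn i)
      rw [hkey (2*M)] at h1
      refine le_trans ?_ h1
      have h2 : (∑ j ∈ range M, p (j+1)) * ∑ i ∈ range M, q i
          ≤ ∑ j ∈ range (2*M), p (j+1) * ∑ i ∈ range (2*M-j), q i := by
        rw [Finset.sum_mul]
        have h2a : ∑ j ∈ range M, p (j+1) * ∑ i ∈ range M, q i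
            ≤ ∑ j ∈ range M, p (j+1) * ∑ i ∈ range (2*M-j), q i := by
          refine Finset.sum_le_sum fun j hj => ?_
          have hjM : j < M := Finset.mem_range.mp hj
          exact mul_le_mul_of_nonneg_left (hTmono (by omega)) (hp _)
        refine h2a.trans ?_
        exact Finset.sum_le_sum_of_subset_of_nonneg (Finset.range_subset_range.mpr (by omega))
          (fun j _ _ => mul_nonneg (hp _) (Finset.sum_nonneg fun i _ => hqnn i))
      nlinarith [mul_le_mul_of_nonneg_left h2 hα0.le]
    have hlim : Filter.Tendsto
        (fun M => 1 + α * ((∑ j ∈ range M, p (j+1)) * ∑ i ∈ range M, q i))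
        Filter.atTop (nhds (1 + α * (1 * ∑' n, q n))) := by
      exact (Filter.Tendsto.const_mul α (hPtend.mul hTtend)).const_add 1
    have := le_of_tendsto hlim (Filter.Eventually.of_forall hstep)
    linarith [this]
  have hQeq : ∑' n, q n = 1 / (1 - α) := by
    have h1 : 1/(1-α) ≤ ∑' n, q n := by
      rw [div_le_iff₀ h1α]; nlinarith
    linarith
  refine ⟨?_, hQeq, ?_⟩
  · -- first conclusion
    intro n hn
    refine ⟨mul_nonneg hα0.le (hp n), ?_⟩
    rw [hq n hn]
    have h0 : (0:ℕ) ∈ range n := Finset.mem_range.mpr hn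
    have h1 : p (n - 0) * q 0 ≤ ∑ k ∈ range n, p (n-k) * q k :=
      Finset.single_le_sum (fun k _ => mul_nonneg (hp _) (hqnn k)) h0
    simp only [Nat.sub_zero, hq0, mul_one] at h1
    exact mul_le_mul_of_nonneg_left h1 hα0.le
  · -- tail bound
    set β := 1 + α₀ with hβdef
    have hβ0 : 0 < β := by rw [hβdef]; linarith
    have h2β : (0:ℝ) < (2:ℝ) ^ β := Real.rpow_pos_of_pos two_pos β
    set Q' := 1/(1-α) with hQ'def
    have hQ'pos : 0 < Q' := by rw [hQ'def]; positivity
    have hqleQ' : ∀ n, q n ≤ Q' := fun n =>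
      (hsummq.le_tsum n fun j _ => hqnn j).trans_eq hQeq
    set δ := (1-α)/(2*α) with hδdef
    have hδpos : 0 < δ := div_pos h1α (by linarith)
    set ε := (1-α)/(4*α*(2:ℝ)^β) with hεdef
    have hεpos : 0 < ε := div_pos h1α (by positivity)
    -- choose m with partial sum of p at least 1 - ε
    obtain ⟨m, hm⟩ : ∃ m, 1 - ε ≤ ∑ j ∈ range m, p (j+1) :=
      (hPtend.eventually (eventually_ge_nhds (by linarith : 1 - ε < 1))).exists
    -- geometric constant
    set c := 1 - (1+δ)^(-(1/β)) with hcdef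
    have h1δ : 1 < 1 + δ := by linarith
    have hc0 : 0 < c := by
      have := Real.rpow_lt_one_of_one_lt_of_neg h1δ
        (by rw [neg_lt, neg_zero]; positivity : -(1/β) < 0)
      rw [hcdef]; linarith
    have h1c : 0 < 1 - c := by
      have h' : 0 < (1+δ)^(-(1/β)) := Real.rpow_pos_of_pos (by linarith) _
      rw [hcdef]; linarith
    have h1cval : (1 - c) ^ (-β) = 1 + δ := by
      rw [hcdef]
      have h' : (1:ℝ) - (1 - (1+δ)^(-(1/β))) = (1+δ)^(-(1/β)) := by ring
      rw [h', ← Real.rpow_mul (by linarith : (0:ℝ) ≤ 1+δ)]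
      have h'' : (-(1/β)) * (-β) = 1 := by field_simp
      rw [h'', Real.rpow_one]
    -- choose N₀
    obtain ⟨k, hk⟩ := exists_nat_ge ((m:ℝ)/c)
    set N₀ := max (2*m+2) k with hN₀def
    have hN₀m : 2*m+2 ≤ N₀ := le_max_left _ _
    have hN₀c : (m:ℝ) ≤ c * N₀ := by
      have h2 : (k:ℝ) ≤ N₀ := Nat.cast_le.mpr (le_max_right _ _)
      rw [div_le_iff₀ hc0] at hk
      nlinarith
    -- decay estimate near n
    have hdecay : ∀ n : ℕ, N₀ ≤ n → ((n:ℝ) - m) ^ (-β) ≤ (1+δ) * (n:ℝ)^(-β) := by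
      intro n hn
      have hn0 : (0:ℝ) < n := by
        have : 0 < n := by omega
        exact_mod_cast this
      have hmn : (m:ℝ) ≤ c * n :=
        hN₀c.trans (mul_le_mul_of_nonneg_left (Nat.cast_le.mpr hn) hc0.le)
      have h1 : (1-c) * n ≤ (n:ℝ) - m := by nlinarith
      have h2 : (0:ℝ) < (1-c) * n := by positivity
      have h3 : ((n:ℝ) - m)^(-β) ≤ ((1-c)*n)^(-β) :=
        Real.rpow_le_rpow_of_nonpos h2 h1 (by linarith)
      have h4 : ((1-c)*n)^(-β) = (1-c)^(-β) * (n:ℝ)^(-β) := Real.mul_rpow h1c.le hn0.le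
      rw [h4, h1cval] at h3
      exact h3
    -- decay estimate at n/2
    have hhalf : ∀ (n : ℕ) (x : ℝ), 1 ≤ n → (n:ℝ)/2 ≤ x →
        x ^ (-β) ≤ (2:ℝ)^β * (n:ℝ)^(-β) := by
      intro n x hn hx
      have hn0 : (0:ℝ) < n := by exact_mod_cast hn
      have h2 : (0:ℝ) < (n:ℝ)/2 := by positivity
      have h3 : x^(-β) ≤ ((n:ℝ)/2)^(-β) :=
        Real.rpow_le_rpow_of_nonpos h2 hx (by linarith)
      have h4 : ((n:ℝ)/2)^(-β) = (2:ℝ)^β * (n:ℝ)^(-β) := by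
        rw [div_eq_mul_inv, Real.mul_rpow hn0.le (by norm_num : (0:ℝ) ≤ 2⁻¹),
          Real.inv_rpow (by norm_num : (0:ℝ) ≤ 2),
          Real.rpow_neg (by norm_num : (0:ℝ) ≤ 2), inv_inv]
        ring
      rw [h4] at h3
      exact h3
    -- the constant
    set A := α * C * (2:ℝ)^β * Q' with hAdef
    have hApos : 0 < A := by rw [hAdef]; positivity
    set C₁ := max (4*A/(1-α)) (Q' * (N₀:ℝ)^β) with hC₁def
    have hC₁pos : 0 < C₁ :=
      lt_of_lt_of_le (by positivity : (0:ℝ) < 4*A/(1-α)) (le_max_left _ _)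
    refine ⟨C₁, hC₁pos, ?_⟩
    intro n
    induction n using Nat.strong_induction_on with
    | _ n ih =>
      intro hn1
      have hn0R : (0:ℝ) < n := by exact_mod_cast hn1
      have hr0 : (0:ℝ) ≤ (n:ℝ)^(-β) := (Real.rpow_pos_of_pos hn0R _).le
      by_cases hcase : n < N₀
      · -- small n
        have hnN : (n:ℝ) ≤ N₀ := Nat.cast_le.mpr hcase.le
        have hpow : (n:ℝ)^β ≤ (N₀:ℝ)^β := Real.rpow_le_rpow hn0R.le hnN hβ0.le
        have hpow0 : (0:ℝ) < (n:ℝ)^β := Real.rpow_pos_of_pos hn0R β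
        have h1 : (1:ℝ) ≤ (N₀:ℝ)^β * (n:ℝ)^(-β) := by
          rw [Real.rpow_neg hn0R.le, ← div_eq_mul_inv]
          exact (one_le_div hpow0).mpr hpow
        calc q n ≤ Q' := hqleQ' n
          _ = Q' * 1 := (mul_one _).symm
          _ ≤ Q' * ((N₀:ℝ)^β * (n:ℝ)^(-β)) := mul_le_mul_of_nonneg_left h1 hQ'pos.le
          _ = (Q' * (N₀:ℝ)^β) * (n:ℝ)^(-β) := by ring
          _ ≤ C₁ * (n:ℝ)^(-β) := mul_le_mul_of_nonneg_right (le_max_right _ _) hr0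
      · -- large n
        push_neg at hcase
        have hnm : 2*m+2 ≤ n := le_trans hN₀m hcase
        set r := (n:ℝ)^(-β) with hrdef
        -- the reflected recursion at n
        have hqn : q n = α * ∑ j ∈ range n, p (j+1) * q (n-1-j) := by
          have h' := hqr (n-1)
          rw [show n-1+1 = n from by omega] at h'
          exact h'
        set H := n/2 with hHdef
        have hmH : m ≤ H := by omega
        have hHn : H ≤ n := by omega
        -- split the sum
        have hsplit : ∑ j ∈ range n, p (j+1) * q (n-1-j)
            = (∑ j ∈ Finset.Ico 0 m, p (j+1) * q (n-1-j))
              + (∑ j ∈ Finset.Ico m H, p (j+1) * q (n-1-j))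
              + (∑ j ∈ Finset.Ico H n, p (j+1) * q (n-1-j)) := by
          rw [Finset.range_eq_Ico,
            ← Finset.sum_Ico_consecutive _ (Nat.zero_le H) hHn,
            ← Finset.sum_Ico_consecutive _ (Nat.zero_le m) hmH]
        -- piece I
        have hS1 : ∑ j ∈ Finset.Ico 0 m, p (j+1) * q (n-1-j) ≤ (1+δ)*C₁*r := by
          have hb : (0:ℝ) ≤ (1+δ)*C₁*r := by positivity
          have hterm : ∀ j ∈ Finset.Ico 0 m, p (j+1) * q (n-1-j)
              ≤ p (j+1) * ((1+δ)*C₁*r) := by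
            intro j hj
            have hjm : j < m := (Finset.mem_Ico.mp hj).2
            have hi1 : 1 ≤ n-1-j := by omega
            have hiq : q (n-1-j) ≤ C₁ * ((n-1-j:ℕ):ℝ)^(-β) := ih _ (by omega) hi1
            have hic : (n:ℝ) - m ≤ ((n-1-j:ℕ):ℝ) := by
              have : n ≤ (n-1-j) + m := by omega
              have := (Nat.cast_le (α := ℝ)).mpr this
              push_cast at this
              linarith
            have hipos : (0:ℝ) < (n:ℝ) - m := by
              have : m < n := by omega
              have := (Nat.cast_lt (α := ℝ)).mpr this
              linarith
            have hile : ((n-1-j:ℕ):ℝ)^(-β) ≤ ((n:ℝ) - m)^(-β) :=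
              Real.rpow_le_rpow_of_nonpos hipos hic (by linarith)
            have hq' : q (n-1-j) ≤ C₁ * ((1+δ)*r) := by
              refine hiq.trans ?_
              refine (mul_le_mul_of_nonneg_left (hile.trans (hdecay n hcase)) hC₁pos.le)
            calc p (j+1) * q (n-1-j) ≤ p (j+1) * (C₁ * ((1+δ)*r)) :=
                mul_le_mul_of_nonneg_left hq' (hp _)
              _ = p (j+1) * ((1+δ)*C₁*r) := by ring
          calc ∑ j ∈ Finset.Ico 0 m, p (j+1) * q (n-1-j)
              ≤ ∑ j ∈ Finset.Ico 0 m, p (j+1) * ((1+δ)*C₁*r) := Finset.sum_le_sum hterm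
            _ = (∑ j ∈ Finset.Ico 0 m, p (j+1)) * ((1+δ)*C₁*r) := by rw [← Finset.sum_mul]
            _ ≤ 1 * ((1+δ)*C₁*r) := by
                refine mul_le_mul_of_nonneg_right ?_ hb
                rw [← Finset.range_eq_Ico]
                exact hPle m
            _ = (1+δ)*C₁*r := one_mul _
        -- piece II
        have hS2 : ∑ j ∈ Finset.Ico m H, p (j+1) * q (n-1-j) ≤ ε*((2:ℝ)^β*C₁*r) := by
          have hb : (0:ℝ) ≤ (2:ℝ)^β*C₁*r := by positivity
          have hterm : ∀ j ∈ Finset.Ico m H, p (j+1) * q (n-1-j)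
              ≤ p (j+1) * ((2:ℝ)^β*C₁*r) := by
            intro j hj
            have hjH : j < H := (Finset.mem_Ico.mp hj).2
            have hi1 : 1 ≤ n-1-j := by omega
            have hiq : q (n-1-j) ≤ C₁ * ((n-1-j:ℕ):ℝ)^(-β) := ih _ (by omega) hi1
            have hic : (n:ℝ)/2 ≤ ((n-1-j:ℕ):ℝ) := by
              have : n ≤ 2*(n-1-j) := by omega
              have := (Nat.cast_le (α := ℝ)).mpr this
              push_cast at this
              linarith
            have hile : ((n-1-j:ℕ):ℝ)^(-β) ≤ (2:ℝ)^β * r := hhalf n _ hn1 hic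
            have hq' : q (n-1-j) ≤ C₁ * ((2:ℝ)^β*r) :=
              hiq.trans (mul_le_mul_of_nonneg_left hile hC₁pos.le)
            calc p (j+1) * q (n-1-j) ≤ p (j+1) * (C₁ * ((2:ℝ)^β*r)) :=
                mul_le_mul_of_nonneg_left hq' (hp _)
              _ = p (j+1) * ((2:ℝ)^β*C₁*r) := by ring
          have hPmh : ∑ j ∈ Finset.Ico m H, p (j+1) ≤ ε := by
            have hcons : (∑ j ∈ Finset.Ico 0 m, p (j+1))
                + ∑ j ∈ Finset.Ico m H, p (j+1) = ∑ j ∈ Finset.Ico 0 H, p (j+1) :=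
              Finset.sum_Ico_consecutive _ (Nat.zero_le m) hmH
            have h1' : ∑ j ∈ Finset.Ico 0 H, p (j+1) ≤ 1 := by
              rw [← Finset.range_eq_Ico]; exact hPle H
            have h2' : 1 - ε ≤ ∑ j ∈ Finset.Ico 0 m, p (j+1) := by
              rw [← Finset.range_eq_Ico]; exact hm
            linarith
          calc ∑ j ∈ Finset.Ico m H, p (j+1) * q (n-1-j)
              ≤ ∑ j ∈ Finset.Ico m H, p (j+1) * ((2:ℝ)^β*C₁*r) := Finset.sum_le_sum hterm
            _ = (∑ j ∈ Finset.Ico m H, p (j+1)) * ((2:ℝ)^β*C₁*r) := by rw [← Finset.sum_mul]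
            _ ≤ ε * ((2:ℝ)^β*C₁*r) := mul_le_mul_of_nonneg_right hPmh hb
        -- piece III
        have hS3 : ∑ j ∈ Finset.Ico H n, p (j+1) * q (n-1-j) ≤ C*(2:ℝ)^β*Q'*r := by
          have hterm : ∀ j ∈ Finset.Ico H n, p (j+1) * q (n-1-j)
              ≤ (C*(2:ℝ)^β*r) * q (n-1-j) := by
            intro j hj
            have hjH : H ≤ j := (Finset.mem_Ico.mp hj).1
            have hic : (n:ℝ)/2 ≤ ((j+1:ℕ):ℝ) := by
              have : n ≤ 2*(j+1) := by omega
              have := (Nat.cast_le (α := ℝ)).mpr this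
              push_cast at this ⊢
              linarith
            have hple : p (j+1) ≤ C * ((2:ℝ)^β * r) := by
              refine (hpC (j+1) (by omega)).trans ?_
              exact mul_le_mul_of_nonneg_left (hhalf n _ hn1 hic) hC.le
            calc p (j+1) * q (n-1-j) ≤ (C * ((2:ℝ)^β * r)) * q (n-1-j) :=
                mul_le_mul_of_nonneg_right hple (hqnn _)
              _ = (C*(2:ℝ)^β*r) * q (n-1-j) := by ring
          have hqsum : ∑ j ∈ Finset.Ico H n, q (n-1-j) ≤ Q' := by
            have hsub : ∑ j ∈ Finset.Ico H n, q (n-1-j)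
                ≤ ∑ j ∈ Finset.Ico 0 n, q (n-1-j) :=
              Finset.sum_le_sum_of_subset_of_nonneg
                (Finset.Ico_subset_Ico (Nat.zero_le H) le_rfl)
                (fun i _ _ => hqnn _)
            have hrefl : ∑ j ∈ Finset.Ico 0 n, q (n-1-j) = ∑ i ∈ range n, q i := by
              rw [← Finset.range_eq_Ico]
              exact Finset.sum_range_reflect q n
            rw [hrefl] at hsub
            exact hsub.trans (hTle n)
          calc ∑ j ∈ Finset.Ico H n, p (j+1) * q (n-1-j)
              ≤ ∑ j ∈ Finset.Ico H n, (C*(2:ℝ)^β*r) * q (n-1-j) := Finset.sum_le_sum hterm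
            _ = (C*(2:ℝ)^β*r) * ∑ j ∈ Finset.Ico H n, q (n-1-j) := by rw [Finset.mul_sum]
            _ ≤ (C*(2:ℝ)^β*r) * Q' := by
                refine mul_le_mul_of_nonneg_left hqsum ?_
                positivity
            _ = C*(2:ℝ)^β*Q'*r := by ring
        -- combine
        have h7 : q n ≤ α * ((1+δ)*C₁*r + ε*((2:ℝ)^β*C₁*r) + C*(2:ℝ)^β*Q'*r) := by
          rw [hqn, hsplit]
          exact mul_le_mul_of_nonneg_left
            (add_le_add (add_le_add hS1 hS2) hS3) hα0.le
        have hδeq : α * (1+δ) = α + (1-α)/2 := by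
          rw [hδdef]; field_simp
        have hεeq : α * (ε * (2:ℝ)^β) = (1-α)/4 := by
          rw [hεdef]; field_simp
        have h8 : α * ((1+δ)*C₁*r + ε*((2:ℝ)^β*C₁*r) + C*(2:ℝ)^β*Q'*r)
            = (α*(1+δ))*C₁*r + (α*(ε*(2:ℝ)^β))*C₁*r + A*r := by
          rw [hAdef]; ring
        rw [h8, hδeq, hεeq] at h7
        have hAle : A ≤ (1-α)/4 * C₁ := by
          have h' : 4*A/(1-α) ≤ C₁ := le_max_left _ _
          rw [div_le_iff₀ h1α] at h'
          nlinarith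
        have h9 : A*r ≤ ((1-α)/4*C₁)*r := mul_le_mul_of_nonneg_right hAle hr0
        have h10 : (α + (1-α)/2)*C₁*r + (1-α)/4*C₁*r + ((1-α)/4*C₁)*r = C₁*r := by
          ring
        linarith
end

section
/- Let α > 1. Suppose (q_n)_{n≥0} and (a_n)_{n≥0} are nonnegative real sequences with q_n ≤ C_q·n^{-(1+α)} for all n ≥ 1 and a_n ≤ C_a·n^{-α} for all n ≥ 1 (q₀, a₀ ≥ 0 arbitrary). Then there exists a constant C > 0 such that the convolution satisfies Σ_{k=0}^{n} q_{n−k}·a_k ≤ C·n^{-α} for every integer n ≥ 1. -/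
lemma aux_tail_sum (β : ℝ) (hβ : 1 < β) (b : ℕ → ℝ) (hb : ∀ n, 0 ≤ b n) (C : ℝ)
    (hC : ∀ n : ℕ, 1 ≤ n → b n ≤ C * (n:ℝ) ^ (-β)) (N : ℕ) :
    ∑ k ∈ Finset.range N, b k ≤ b 0 + C * ∑' k : ℕ, (k:ℝ) ^ (-β) := by
  have hsum : Summable (fun n : ℕ => (n:ℝ) ^ (-β)) :=
    Real.summable_nat_rpow.2 (by linarith)
  have hC0 : 0 ≤ C := by
    have := hC 1 le_rfl
    simp [Real.one_rpow] at this
    exact le_trans (hb 1) this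
  have htpos : 0 ≤ ∑' k : ℕ, (k:ℝ) ^ (-β) :=
    tsum_nonneg fun k => Real.rpow_nonneg (Nat.cast_nonneg k) _
  cases N with
  | zero => simpa using add_nonneg (hb 0) (mul_nonneg hC0 htpos)
  | succ M =>
    rw [Finset.sum_range_succ']
    have hsum' : Summable (fun i : ℕ => ((i+1:ℕ):ℝ) ^ (-β)) :=
      (summable_nat_add_iff 1).2 hsum
    have hts : (∑' i : ℕ, ((i+1:ℕ):ℝ) ^ (-β)) = ∑' k : ℕ, (k:ℝ) ^ (-β) := by
      rw [Summable.tsum_eq_zero_add hsum]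
      simp [Real.zero_rpow (neg_ne_zero.mpr (by linarith : β ≠ 0))]
    have h1 : ∑ i ∈ Finset.range M, b (i+1) ≤
        ∑ i ∈ Finset.range M, C * ((i+1:ℕ):ℝ) ^ (-β) :=
      Finset.sum_le_sum fun i _ => hC (i+1) (Nat.le_add_left 1 i)
    have h2 : ∑ i ∈ Finset.range M, C * ((i+1:ℕ):ℝ) ^ (-β) ≤
        C * ∑' k : ℕ, (k:ℝ) ^ (-β) := by
      rw [← Finset.mul_sum, ← hts]
      exact mul_le_mul_of_nonneg_left
        (Summable.sum_le_tsum _ (fun i _ => Real.rpow_nonneg (Nat.cast_nonneg _) _) hsum') hC0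
    linarith

lemma aux_half_bound (β : ℝ) (hβ : 0 < β) (n x : ℝ) (hn : 0 < n) (hx : n/2 ≤ x) :
    x ^ (-β) ≤ 2 ^ β * n ^ (-β) := by
  have h1 : x ^ (-β) ≤ (n/2) ^ (-β) :=
    Real.rpow_le_rpow_of_nonpos (by positivity) hx (by linarith)
  have h2 : (n/2:ℝ) ^ (-β) = 2 ^ β * n ^ (-β) := by
    rw [Real.div_rpow hn.le (by norm_num), Real.rpow_neg (by norm_num : (0:ℝ) ≤ 2),
      div_eq_mul_inv, inv_inv]
    ring

  linarith


/-- Discrete convolution estimate: if `q_n ≤ C_q n^{-(1+α)}` and `a_n ≤ C_a n^{-α}` for `n ≥ 1`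
(both sequences nonnegative, `α > 1`), then `Σ_{k=0}^{n} q_{n-k} a_k ≤ C n^{-α}` for all `n ≥ 1`. -/
theorem statement6 (α : ℝ) (hα : 1 < α)
    (q a : ℕ → ℝ) (hq : ∀ n, 0 ≤ q n) (ha : ∀ n, 0 ≤ a n)
    (C_q C_a : ℝ)
    (hqC : ∀ n : ℕ, 1 ≤ n → q n ≤ C_q * (n : ℝ) ^ (-(1 + α)))
    (haC : ∀ n : ℕ, 1 ≤ n → a n ≤ C_a * (n : ℝ) ^ (-α)) :
    ∃ C : ℝ, 0 < C ∧ ∀ n : ℕ, 1 ≤ n →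
      ∑ k ∈ Finset.range (n + 1), q (n - k) * a k ≤ C * (n : ℝ) ^ (-α) := by

  have hα0 : 0 < α := by linarith
  have hCq0 : 0 ≤ C_q := by
    have := hqC 1 le_rfl; simp [Real.one_rpow] at this
    exact le_trans (hq 1) this
  have hCa0 : 0 ≤ C_a := by
    have := haC 1 le_rfl; simp [Real.one_rpow] at this
    exact le_trans (ha 1) this
  set S_a : ℝ := ∑' k : ℕ, (k:ℝ) ^ (-α) with hSa_def
  set S_q : ℝ := ∑' k : ℕ, (k:ℝ) ^ (-(1+α)) with hSq_def
  have hSa0 : 0 ≤ S_a := tsum_nonneg fun k => Real.rpow_nonneg (Nat.cast_nonneg k) _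
  have hSq0 : 0 ≤ S_q := tsum_nonneg fun k => Real.rpow_nonneg (Nat.cast_nonneg k) _
  have hA0 : 0 ≤ (2:ℝ)^(1+α) * C_q * (a 0 + C_a * S_a) := by
    have := ha 0
    have h2 : (0:ℝ) ≤ (2:ℝ)^(1+α) := Real.rpow_nonneg (by norm_num) _
    have : 0 ≤ a 0 + C_a * S_a := by positivity
    positivity
  have hB0 : 0 ≤ (2:ℝ)^α * C_a * (q 0 + C_q * S_q) := by
    have := hq 0
    have : 0 ≤ q 0 + C_q * S_q := by positivity
    positivity
  refine ⟨(2:ℝ)^(1+α) * C_q * (a 0 + C_a * S_a) + (2:ℝ)^α * C_a * (q 0 + C_q * S_q) + 1,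
    by linarith, ?_⟩
  intro n hn
  have hnR : (0:ℝ) < n := by exact_mod_cast hn
  have hnR1 : (1:ℝ) ≤ n := by exact_mod_cast hn
  have hpow0 : 0 < (n:ℝ) ^ (-α) := Real.rpow_pos_of_pos hnR _
  set m := n / 2 with hm
  have hsplit : ∑ k ∈ Finset.range (n + 1), q (n - k) * a k
      = ∑ k ∈ Finset.Ico 0 (m+1), q (n - k) * a k
        + ∑ k ∈ Finset.Ico (m+1) (n+1), q (n - k) * a k := by
    rw [Finset.range_eq_Ico,
      ← Finset.sum_Ico_consecutive _ (Nat.zero_le (m+1)) (by omega : m+1 ≤ n+1)]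
  have part1 : ∑ k ∈ Finset.Ico 0 (m+1), q (n - k) * a k
      ≤ (2:ℝ)^(1+α) * C_q * (a 0 + C_a * S_a) * (n:ℝ)^(-α) := by
    have hterm : ∀ k ∈ Finset.Ico 0 (m+1),
        q (n - k) * a k ≤ ((2:ℝ)^(1+α) * C_q * (n:ℝ)^(-α)) * a k := by
      intro k hk
      rw [Finset.mem_Ico] at hk
      have hkm : k ≤ m := by omega
      have hnk1 : 1 ≤ n - k := by omega
      have hcast : (n:ℝ)/2 ≤ ((n - k : ℕ):ℝ) := by
        have : n ≤ 2 * (n - k) := by omega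
        have := (Nat.cast_le (α := ℝ)).2 this
        push_cast at this
        linarith
      have hb : ((n-k:ℕ):ℝ) ^ (-(1+α)) ≤ (2:ℝ)^(1+α) * (n:ℝ)^(-(1+α)) :=
        aux_half_bound (1+α) (by linarith) _ _ hnR hcast
      have hmono : (n:ℝ)^(-(1+α)) ≤ (n:ℝ)^(-α) :=
        Real.rpow_le_rpow_of_exponent_le hnR1 (by linarith)
      have h2p : (0:ℝ) ≤ (2:ℝ)^(1+α) := Real.rpow_nonneg (by norm_num) _
      have hqb : q (n - k) ≤ (2:ℝ)^(1+α) * C_q * (n:ℝ)^(-α) := by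
        calc q (n - k) ≤ C_q * ((n-k:ℕ):ℝ) ^ (-(1+α)) := hqC _ hnk1
          _ ≤ C_q * ((2:ℝ)^(1+α) * (n:ℝ)^(-(1+α))) :=
              mul_le_mul_of_nonneg_left hb hCq0
          _ ≤ C_q * ((2:ℝ)^(1+α) * (n:ℝ)^(-α)) := by
              apply mul_le_mul_of_nonneg_left _ hCq0
              exact mul_le_mul_of_nonneg_left hmono h2p
          _ = (2:ℝ)^(1+α) * C_q * (n:ℝ)^(-α) := by ring
      exact mul_le_mul_of_nonneg_right hqb (ha k)
    calc ∑ k ∈ Finset.Ico 0 (m+1), q (n - k) * a k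
        ≤ ∑ k ∈ Finset.Ico 0 (m+1), ((2:ℝ)^(1+α) * C_q * (n:ℝ)^(-α)) * a k :=
          Finset.sum_le_sum hterm
      _ = ((2:ℝ)^(1+α) * C_q * (n:ℝ)^(-α)) * ∑ k ∈ Finset.range (m+1), a k := by
          rw [← Finset.range_eq_Ico, Finset.mul_sum]
      _ ≤ ((2:ℝ)^(1+α) * C_q * (n:ℝ)^(-α)) * (a 0 + C_a * S_a) := by
          apply mul_le_mul_of_nonneg_left (aux_tail_sum α hα a ha C_a haC (m+1))
          have h2p : (0:ℝ) ≤ (2:ℝ)^(1+α) := Real.rpow_nonneg (by norm_num) _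
          positivity
      _ = (2:ℝ)^(1+α) * C_q * (a 0 + C_a * S_a) * (n:ℝ)^(-α) := by ring
  have part2 : ∑ k ∈ Finset.Ico (m+1) (n+1), q (n - k) * a k
      ≤ (2:ℝ)^α * C_a * (q 0 + C_q * S_q) * (n:ℝ)^(-α) := by
    have hterm : ∀ k ∈ Finset.Ico (m+1) (n+1),
        q (n - k) * a k ≤ q (n - k) * ((2:ℝ)^α * C_a * (n:ℝ)^(-α)) := by
      intro k hk
      rw [Finset.mem_Ico] at hk
      have hk1 : 1 ≤ k := by omega
      have hcast : (n:ℝ)/2 ≤ (k:ℝ) := by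
        have : n ≤ 2 * k := by omega
        have := (Nat.cast_le (α := ℝ)).2 this
        push_cast at this
        linarith
      have hb : (k:ℝ) ^ (-α) ≤ (2:ℝ)^α * (n:ℝ)^(-α) :=
        aux_half_bound α hα0 _ _ hnR hcast
      have hab : a k ≤ (2:ℝ)^α * C_a * (n:ℝ)^(-α) := by
        calc a k ≤ C_a * (k:ℝ) ^ (-α) := haC _ hk1
          _ ≤ C_a * ((2:ℝ)^α * (n:ℝ)^(-α)) := mul_le_mul_of_nonneg_left hb hCa0
          _ = (2:ℝ)^α * C_a * (n:ℝ)^(-α) := by ring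
      exact mul_le_mul_of_nonneg_left hab (hq _)
    have hsub : ∑ k ∈ Finset.Ico (m+1) (n+1), q (n - k)
        ≤ ∑ k ∈ Finset.range (n+1), q (n - k) := by
      apply Finset.sum_le_sum_of_subset_of_nonneg
      · intro k hk
        rw [Finset.mem_Ico] at hk
        exact Finset.mem_range.2 (by omega)
      · intro k _ _; exact hq _
    have hrefl : ∑ k ∈ Finset.range (n+1), q (n - k) = ∑ k ∈ Finset.range (n+1), q k := by
      have := Finset.sum_range_reflect q (n+1)
      simpa using this
    have hQ : ∑ k ∈ Finset.Ico (m+1) (n+1), q (n - k) ≤ q 0 + C_q * S_q := by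
      calc ∑ k ∈ Finset.Ico (m+1) (n+1), q (n - k)
          ≤ ∑ k ∈ Finset.range (n+1), q (n - k) := hsub
        _ = ∑ k ∈ Finset.range (n+1), q k := hrefl
        _ ≤ q 0 + C_q * S_q := aux_tail_sum (1+α) (by linarith) q hq C_q hqC (n+1)
    have hfac : (0:ℝ) ≤ (2:ℝ)^α * C_a * (n:ℝ)^(-α) := by
      have h2p : (0:ℝ) ≤ (2:ℝ)^α := Real.rpow_nonneg (by norm_num) _
      positivity
    calc ∑ k ∈ Finset.Ico (m+1) (n+1), q (n - k) * a k
        ≤ ∑ k ∈ Finset.Ico (m+1) (n+1), q (n - k) * ((2:ℝ)^α * C_a * (n:ℝ)^(-α)) :=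
          Finset.sum_le_sum hterm
      _ = (∑ k ∈ Finset.Ico (m+1) (n+1), q (n - k)) * ((2:ℝ)^α * C_a * (n:ℝ)^(-α)) := by
          rw [Finset.sum_mul]
      _ ≤ (q 0 + C_q * S_q) * ((2:ℝ)^α * C_a * (n:ℝ)^(-α)) :=
          mul_le_mul_of_nonneg_right hQ hfac
      _ = (2:ℝ)^α * C_a * (q 0 + C_q * S_q) * (n:ℝ)^(-α) := by ring
  rw [hsplit]
  nlinarith [hpow0.le]
end

section
/- Assume R < ∞ μ-a.e. and that there exist C > 0 and α₀ > 1 with μ(M ∩ {R = k}) ≤ C·k^{-(1+α₀)} for all k ≥ 1. Set β₀ = min{α₀, 2α₀ − 2}. Then there exist C' > 0 and N ≥ 1 such that for every n ≥ N (so that μ(B_n) < 1) and every bounded measurable f : X → ℝ vanishing μ-a.e. outside M, | ∫ f∘Tⁿ dμⁿ − (∫ f dμ)·(1 + μ({R > n})) | ≤ C'·‖f‖_∞·n^{-β₀}. Equivalently, for any probability measure ν on X, ∫ f∘Tⁿ dν − ∫ f dμ − (∫ f dμ)·μ({R > n}) = ( ∫ f∘Tⁿ dν − ∫ f∘Tⁿ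 dμⁿ ) + O(‖f‖_∞ n^{-β₀}). -/
open MeasureTheory
open scoped ENNReal

/-- The first hitting time of `M` under iterations of `T`:
`R(x) = inf {n ≥ 1 : Tⁿ x ∈ M}`, valued in `ℕ∞` (equal to `⊤` if the orbit never enters `M`). -/
noncomputable def firstHitting {X : Type*} (T : X → X) (M : Set X) (x : X) : ℕ∞ :=
  sInf {n : ℕ∞ | ∃ k : ℕ, n = (k : ℕ∞) ∧ 1 ≤ k ∧ T^[k] x ∈ M}

/-- Auxiliary: the set of points whose orbit avoids `M` during times `1, …, n`. -/
def hitSet {X : Type*} (T : X → X) (M : Set X) (n : ℕ) : Set X :=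
  {x | ∀ k : ℕ, 1 ≤ k → k ≤ n → T^[k] x ∉ M}

lemma mem_hitSet {X : Type*} {T : X → X} {M : Set X} {n : ℕ} {x : X} :
    x ∈ hitSet T M n ↔ ∀ k : ℕ, 1 ≤ k → k ≤ n → T^[k] x ∉ M := Iff.rfl

lemma fh_lt_iff {X : Type*} (T : X → X) (M : Set X) (n : ℕ) :
    {x | (n : ℕ∞) < firstHitting T M x} = hitSet T M n := by
  ext x
  simp only [Set.mem_setOf_eq, firstHitting, mem_hitSet]
  constructor
  · intro h k hk1 hkn hmem
    have h1 : ((k : ℕ∞)) ∈ {n : ℕ∞ | ∃ k : ℕ, n = (k : ℕ∞) ∧ 1 ≤ k ∧ T^[k] x ∈ M} :=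
      ⟨k, rfl, hk1, hmem⟩
    have h3 : (n : ℕ∞) < (k : ℕ∞) := lt_of_lt_of_le h (sInf_le h1)
    exact absurd (by exact_mod_cast h3) (not_lt.2 hkn)
  · intro h
    refine lt_of_lt_of_le (by exact_mod_cast Nat.lt_succ_self n : (n : ℕ∞) < ((n+1 : ℕ) : ℕ∞))
      (le_sInf ?_)
    rintro b ⟨k, rfl, hk1, hkM⟩
    have : ¬ k ≤ n := fun hkn => h k hk1 hkn hkM
    exact_mod_cast Nat.succ_le_of_lt (not_le.1 this)

lemma fh_eq_coe {X : Type*} (T : X → X) (M : Set X) (x : X) (j : ℕ) (hj1 : 1 ≤ j)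
    (hjM : T^[j] x ∈ M) (hmin : ∀ k, 1 ≤ k → k < j → T^[k] x ∉ M) :
    firstHitting T M x = (j : ℕ∞) := by
  refine le_antisymm (sInf_le ⟨j, rfl, hj1, hjM⟩) (le_sInf ?_)
  rintro b ⟨k, rfl, hk1, hkM⟩
  have : ¬ k < j := fun hkj => hmin k hk1 hkj hkM
  exact_mod_cast not_lt.1 this

lemma fh_eq_top {X : Type*} (T : X → X) (M : Set X) (x : X)
    (h : ∀ k : ℕ, 1 ≤ k → T^[k] x ∉ M) : firstHitting T M x = ⊤ := by
  rw [firstHitting, sInf_eq_top]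
  rintro b ⟨k, rfl, hk1, hkM⟩
  exact absurd hkM (h k hk1)

lemma hitSet_mble {X : Type*} [MeasurableSpace X] {T : X → X} {M : Set X}
    (hTm : Measurable T) (hM : MeasurableSet M) (n : ℕ) : MeasurableSet (hitSet T M n) := by
  have : hitSet T M n = ⋂ (k : ℕ) (_ : 1 ≤ k) (_ : k ≤ n), T^[k] ⁻¹' Mᶜ := by
    ext x; simp [mem_hitSet, Set.mem_iInter]
  rw [this]
  exact MeasurableSet.iInter fun k => MeasurableSet.iInter fun _ =>
    MeasurableSet.iInter fun _ => (hTm.iterate k) hM.compl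

lemma hitSet_anti {X : Type*} {T : X → X} {M : Set X} : Antitone (hitSet T M) := by
  intro m n hmn x hx k hk1 hkm
  exact hx k hk1 (hkm.trans hmn)

lemma kac {X : Type*} [MeasurableSpace X] (μ : Measure X) (T : X → X)
    (hT : MeasurePreserving T μ μ) (M : Set X) (hM : MeasurableSet M) (n : ℕ) :
    μ (hitSet T M n) = μ (M ∩ hitSet T M n) + μ (hitSet T M (n+1)) := by
  have hTm := hT.measurable
  have hsets : T ⁻¹' (hitSet T M n) = (T ⁻¹' (M ∩ hitSet T M n)) ∪ hitSet T M (n+1) := by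
    ext x
    simp only [Set.mem_preimage, Set.mem_union, Set.mem_inter_iff, mem_hitSet]
    constructor
    · intro h
      by_cases hTx : T x ∈ M
      · exact Or.inl ⟨hTx, h⟩
      · refine Or.inr fun k hk1 hkn => ?_
        obtain ⟨j, rfl⟩ : ∃ j, k = j + 1 := ⟨k - 1, by omega⟩
        rw [Function.iterate_succ_apply]
        rcases Nat.eq_zero_or_pos j with hj | hj
        · subst hj; simpa using hTx
        · exact h j hj (by omega)
    · rintro (⟨hTx, h⟩ | h) k hk1 hkn
      · exact h k hk1 hkn
      · rw [← Function.iterate_succ_apply]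
        exact h (k+1) (by omega) (by omega)
  have hdisj : Disjoint (T ⁻¹' (M ∩ hitSet T M n)) (hitSet T M (n+1)) := by
    rw [Set.disjoint_left]
    rintro x ⟨hTx, -⟩ hx
    exact hx 1 le_rfl (by omega) (by simpa using hTx)
  calc μ (hitSet T M n) = μ (T ⁻¹' (hitSet T M n)) :=
        (hT.measure_preimage (hitSet_mble hTm hM n).nullMeasurableSet).symm
    _ = μ (T ⁻¹' (M ∩ hitSet T M n)) + μ (hitSet T M (n+1)) := by
        rw [hsets]; exact measure_union hdisj (hitSet_mble hTm hM (n+1))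
    _ = μ (M ∩ hitSet T M n) + μ (hitSet T M (n+1)) := by
        rw [hT.measure_preimage ((hM.inter (hitSet_mble hTm hM n)).nullMeasurableSet)]

lemma tailSummable {s : ℝ} (hs : 1 < s) (n : ℕ) :
    Summable (fun j : ℕ => ((n : ℝ) + 1 + j) ^ (-s)) := by
  have h := Real.summable_nat_rpow (p := -s) |>.2 (by linarith)
  have h2 := (summable_nat_add_iff (f := fun k : ℕ => (k : ℝ) ^ (-s)) (n + 1)).2 h
  refine h2.congr fun j => ?_
  push_cast
  ring_nf

lemma tailSum {s : ℝ} (hs : 1 < s) (n : ℕ) (hn : 1 ≤ n) :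
    ∑' j : ℕ, ((n : ℝ) + 1 + j) ^ (-s) ≤ (s - 1)⁻¹ * (n : ℝ) ^ (1 - s) := by
  have hn0 : (0:ℝ) < n := by exact_mod_cast hn
  have hs0 : 0 < s - 1 := by linarith
  apply Real.tsum_le_of_sum_range_le
  · intro j
    positivity
  · intro m
    have hanti : AntitoneOn (fun x : ℝ => x ^ (-s)) (Set.Icc (n:ℝ) ((n:ℝ) + m)) := by
      intro x hx y hy hxy
      exact Real.rpow_le_rpow_of_nonpos (lt_of_lt_of_le hn0 hx.1) hxy (by linarith)
    have hsum := hanti.sum_le_integral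
    have hint : ∫ x in (n:ℝ)..((n:ℝ) + m), x ^ (-s)
        = (((n:ℝ)+m) ^ (-s+1) - (n:ℝ) ^ (-s+1)) / (-s+1) := by
      apply integral_rpow
      right
      constructor
      · intro h; linarith
      · intro h
        rw [Set.uIcc_of_le (by linarith [Nat.cast_nonneg (α := ℝ) m])] at h
        exact absurd h.1 (by linarith)
    calc ∑ i ∈ Finset.range m, ((n : ℝ) + 1 + i) ^ (-s)
        = ∑ i ∈ Finset.range m, (fun x : ℝ => x ^ (-s)) ((n:ℝ) + (i + 1 : ℕ)) := by
          apply Finset.sum_congr rfl; intro i _; push_cast; ring_nf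
      _ ≤ ∫ x in (n:ℝ)..((n:ℝ) + m), x ^ (-s) := hsum
      _ = (((n:ℝ)+m) ^ (-s+1) - (n:ℝ) ^ (-s+1)) / (-s+1) := hint
      _ = ((n:ℝ) ^ (1-s) - ((n:ℝ)+m) ^ (1-s)) / (s-1) := by
          rw [show -s+1 = 1-s by ring]
          rw [div_eq_div_iff (by linarith : (1:ℝ) - s ≠ 0) (by intro h; linarith : (s:ℝ) - 1 ≠ 0)]
          ring
      _ ≤ (n:ℝ) ^ (1-s) / (s-1) := by
          have : (0:ℝ) ≤ ((n:ℝ)+m) ^ (1-s) := Real.rpow_nonneg (by positivity) _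
          gcongr
          linarith
      _ = (s - 1)⁻¹ * (n : ℝ) ^ (1 - s) := by ring

lemma tail_ofReal {c s : ℝ} (hc : 0 ≤ c) (hs : 1 < s) (n : ℕ) (hn : 1 ≤ n) :
    ∑' j : ℕ, ENNReal.ofReal (c * ((n:ℝ) + 1 + j) ^ (-s)) ≤
      ENNReal.ofReal (c * (s-1)⁻¹ * (n:ℝ) ^ (1-s)) := by
  rw [← ENNReal.ofReal_tsum_of_nonneg (fun j => by positivity)
    ((tailSummable hs n).mul_left c)]
  apply ENNReal.ofReal_le_ofReal
  rw [tsum_mul_left, mul_assoc]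
  exact mul_le_mul_of_nonneg_left (tailSum hs n hn) hc

set_option maxHeartbeats 1000000 in
/-- Under the tail assumption `μ(M ∩ {R = k}) ≤ C k^{-(1+α₀)}` (`α₀ > 1`) and `R < ∞` a.e.,
with `β₀ = min(α₀, 2α₀ - 2)`: there are `C' > 0`, `N ≥ 1` such that for all `n ≥ N`
(`μ(Bₙ) < 1`, `Bₙ = {R > n} \ M`) and all bounded measurable `f` vanishing a.e. outside `M`,
`|∫ f∘Tⁿ dμⁿ - (∫ f dμ)(1 + μ(R > n))| ≤ C' ‖f‖_∞ n^{-β₀}`, where `μⁿ = μ(·|Bₙᶜ)`. -/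
theorem statement8 {X : Type*} [MeasurableSpace X] (μ : Measure X) [IsProbabilityMeasure μ]
    (T : X → X) (hT : MeasurePreserving T μ μ) (M : Set X) (hM : MeasurableSet M)
    (hfin : ∀ᵐ x ∂μ, firstHitting T M x ≠ ⊤)
    (C α₀ : ℝ) (hC : 0 < C) (hα₀ : 1 < α₀)
    (htail : ∀ k : ℕ, 1 ≤ k →
      μ (M ∩ {x | firstHitting T M x = (k : ℕ∞)}) ≤
        ENNReal.ofReal (C * (k : ℝ) ^ (-(1 + α₀)))) :
    ∃ C' : ℝ, 0 < C' ∧ ∃ N : ℕ, 1 ≤ N ∧ ∀ n : ℕ, N ≤ n →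
      μ ({x | (n : ℕ∞) < firstHitting T M x} \ M) < 1 ∧
      ∀ f : X → ℝ, Measurable f → ∀ K : ℝ, (∀ x, |f x| ≤ K) →
        (∀ᵐ x ∂μ, x ∉ M → f x = 0) →
        |(∫ x, f (T^[n] x)
            ∂(ProbabilityTheory.cond μ ({x | (n : ℕ∞) < firstHitting T M x} \ M)ᶜ)) -
          (∫ x, f x ∂μ) * (1 + (μ {x | (n : ℕ∞) < firstHitting T M x}).toReal)| ≤
          C' * K * (n : ℝ) ^ (-(min α₀ (2 * α₀ - 2))) := by
  classical
  have hTm := hT.measurable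
  have hα0 : (0:ℝ) < α₀ - 1 := by linarith
  set β := min α₀ (2 * α₀ - 2) with hβ
  set c₁ : ℝ := C * α₀⁻¹ with hc₁
  set c₂ : ℝ := C * α₀⁻¹ * (1 + (α₀ - 1)⁻¹) with hc₂
  have hc₁0 : 0 < c₁ := by rw [hc₁]; positivity
  have hc₂0 : 0 < c₂ := by rw [hc₂]; positivity
  have hAm : ∀ n : ℕ, MeasurableSet (hitSet T M n) := hitSet_mble hTm hM
  -- the set where R = ⊤ is null
  have htop : μ {x | firstHitting T M x = ⊤} = 0 := by
    have := ae_iff.mp hfin; simpa using this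
  have hInter : μ (⋂ n, hitSet T M n) = 0 := by
    refine measure_mono_null ?_ htop
    intro x hx
    simp only [Set.mem_iInter] at hx
    exact fh_eq_top T M x fun k hk1 => hx k k hk1 le_rfl
  have hlim : Filter.Tendsto (fun n => μ (hitSet T M n)) Filter.atTop (nhds 0) := by
    have := tendsto_measure_iInter_atTop (μ := μ) (fun n => (hAm n).nullMeasurableSet)
      hitSet_anti ⟨0, measure_ne_top _ _⟩
    rwa [hInter] at this
  -- tail bound for μ (M ∩ A n)
  have hMA : ∀ n : ℕ, 1 ≤ n →
      μ (M ∩ hitSet T M n) ≤ ENNReal.ofReal (c₁ * (n:ℝ) ^ (-α₀)) := by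
    intro n hn
    have hsub : M ∩ hitSet T M n ⊆ {x | firstHitting T M x = ⊤} ∪
        ⋃ j : ℕ, (M ∩ {x | firstHitting T M x = ((n+1+j : ℕ) : ℕ∞)}) := by
      rintro x ⟨hxM, hxA⟩
      by_cases hex : ∃ m : ℕ, 1 ≤ m ∧ T^[m] x ∈ M
      · right
        have hj1 := (Nat.find_spec hex).1
        have hjM := (Nat.find_spec hex).2
        have hmin : ∀ k, 1 ≤ k → k < Nat.find hex → T^[k] x ∉ M :=
          fun k hk1 hkj hkM => Nat.find_min hex hkj ⟨hk1, hkM⟩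
        have hgt : n < Nat.find hex := by
          by_contra hle
          exact hxA _ hj1 (not_lt.1 hle) hjM
        refine Set.mem_iUnion.2 ⟨Nat.find hex - n - 1, hxM, ?_⟩
        show firstHitting T M x = _
        rw [fh_eq_coe T M x _ hj1 hjM hmin]
        exact_mod_cast congrArg (Nat.cast : ℕ → ℕ∞) (by omega)
      · left
        exact fh_eq_top T M x fun k hk1 hkM => hex ⟨k, hk1, hkM⟩
    calc μ (M ∩ hitSet T M n)
        ≤ μ ({x | firstHitting T M x = ⊤} ∪
            ⋃ j : ℕ, (M ∩ {x | firstHitting T M x = ((n+1+j : ℕ) : ℕ∞)})) := measure_mono hsub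
      _ ≤ μ {x | firstHitting T M x = ⊤} +
            μ (⋃ j : ℕ, (M ∩ {x | firstHitting T M x = ((n+1+j : ℕ) : ℕ∞)})) :=
          measure_union_le _ _
      _ = μ (⋃ j : ℕ, (M ∩ {x | firstHitting T M x = ((n+1+j : ℕ) : ℕ∞)})) := by
          rw [htop, zero_add]
      _ ≤ ∑' j : ℕ, μ (M ∩ {x | firstHitting T M x = ((n+1+j : ℕ) : ℕ∞)}) :=
          measure_iUnion_le _
      _ ≤ ∑' j : ℕ, ENNReal.ofReal (C * ((n:ℝ) + 1 + j) ^ (-(1+α₀))) := by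
          refine ENNReal.tsum_le_tsum fun j => le_trans (htail (n+1+j) (by omega)) (le_of_eq ?_)
          congr 2
          push_cast
          ring
      _ ≤ ENNReal.ofReal (C * ((1+α₀)-1)⁻¹ * (n:ℝ) ^ (1-(1+α₀))) :=
          tail_ofReal hC.le (by linarith) n hn
      _ = ENNReal.ofReal (c₁ * (n:ℝ) ^ (-α₀)) := by
          rw [show (1+α₀)-1 = α₀ by ring, show 1-(1+α₀) = -α₀ by ring, hc₁]
  -- telescoping
  have htel : ∀ n m : ℕ, μ (hitSet T M n) =
      (∑ k ∈ Finset.range m, μ (M ∩ hitSet T M (n+k))) + μ (hitSet T M (n+m)) := by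
    intro n m
    induction m with
    | zero => simp
    | succ m ih =>
      rw [Finset.sum_range_succ, add_assoc, show n + (m+1) = (n+m)+1 from rfl,
        ← kac μ T hT M hM (n+m), ← ih]
  have hAsum : ∀ n : ℕ, μ (hitSet T M n) = ∑' k : ℕ, μ (M ∩ hitSet T M (n+k)) := by
    intro n
    have h2 : Filter.Tendsto (fun m => μ (hitSet T M (n+m))) Filter.atTop (nhds 0) :=
      (hlim.comp (Filter.tendsto_add_atTop_nat n)).congr fun m => by show μ (hitSet T M (m+n)) = μ (hitSet T M (n+m)); rw [Nat.add_comm]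
    have h1 : Filter.Tendsto
        (fun m => (∑ k ∈ Finset.range m, μ (M ∩ hitSet T M (n+k))) + μ (hitSet T M (n+m)))
        Filter.atTop (nhds ((∑' k : ℕ, μ (M ∩ hitSet T M (n+k))) + 0)) :=
      (ENNReal.tendsto_nat_tsum _).add h2
    have h3 : Filter.Tendsto
        (fun m => (∑ k ∈ Finset.range m, μ (M ∩ hitSet T M (n+k))) + μ (hitSet T M (n+m)))
        Filter.atTop (nhds (μ (hitSet T M n))) :=
      Filter.Tendsto.congr (fun m => (htel n m)) tendsto_const_nhds
    have := tendsto_nhds_unique h3 h1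
    simpa using this
  -- bound for μ (A n)
  have hA : ∀ n : ℕ, 1 ≤ n → μ (hitSet T M n) ≤ ENNReal.ofReal (c₂ * (n:ℝ) ^ (1-α₀)) := by
    intro n hn
    rw [hAsum n, tsum_eq_zero_add' ENNReal.summable]
    calc μ (M ∩ hitSet T M (n+0)) + ∑' k : ℕ, μ (M ∩ hitSet T M (n+(k+1)))
        ≤ ENNReal.ofReal (c₁ * (n:ℝ) ^ (-α₀)) +
          ∑' k : ℕ, ENNReal.ofReal (c₁ * ((n:ℝ)+1+k) ^ (-α₀)) := by
          refine add_le_add (by simpa using hMA n hn) (ENNReal.tsum_le_tsum fun k => ?_)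
          refine le_trans (hMA (n+(k+1)) (by omega)) (le_of_eq ?_)
          congr 2
          push_cast
          ring
      _ ≤ ENNReal.ofReal (c₁ * (n:ℝ) ^ (-α₀)) +
          ENNReal.ofReal (c₁ * (α₀-1)⁻¹ * (n:ℝ) ^ (1-α₀)) :=
          add_le_add_right (tail_ofReal hc₁0.le hα₀ n hn) _
      _ ≤ ENNReal.ofReal (c₂ * (n:ℝ) ^ (1-α₀)) := by
          rw [← ENNReal.ofReal_add (by positivity) (by positivity)]
          apply ENNReal.ofReal_le_ofReal
          have hmono : (n:ℝ) ^ (-α₀) ≤ (n:ℝ) ^ (1-α₀) :=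
            Real.rpow_le_rpow_of_exponent_le (by exact_mod_cast hn) (by linarith)
          have := mul_le_mul_of_nonneg_left hmono hc₁0.le
          rw [hc₂, hc₁]
          rw [hc₁] at this
          nlinarith [Real.rpow_nonneg (Nat.cast_nonneg (α := ℝ) n) (1-α₀)]
  -- choose N
  obtain ⟨N₀, hN₀⟩ := Filter.eventually_atTop.1
    (hlim.eventually_lt_const (by norm_num : (0:ℝ≥0∞) < 1/2))
  refine ⟨2*c₁ + 2*c₂^2, by positivity, max N₀ 1, le_max_right _ _, ?_⟩
  intro n hn
  have hn1 : 1 ≤ n := le_trans (le_max_right _ _) hn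
  have hn1' : (1:ℝ) ≤ (n:ℝ) := by exact_mod_cast hn1
  have hhalf : μ (hitSet T M n) < 1/2 := hN₀ n (le_trans (le_max_left _ _) hn)
  rw [fh_lt_iff T M n]
  set B := hitSet T M n \ M with hBdef
  have hBm : MeasurableSet B := (hAm n).diff hM
  have hμB_le : μ B ≤ μ (hitSet T M n) := measure_mono Set.diff_subset
  refine ⟨lt_of_le_of_lt (hμB_le.trans hhalf.le) (by norm_num), ?_⟩
  intro f hf K hK hvanish
  -- basic facts
  have hX : Nonempty X := by
    by_contra h
    rw [not_nonempty_iff] at h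
    have h1 : (μ Set.univ) = 1 := measure_univ
    rw [Set.univ_eq_empty_iff.2 h, measure_empty] at h1
    exact zero_ne_one h1
  obtain ⟨x₀⟩ := hX
  have hK0 : 0 ≤ K := le_trans (abs_nonneg _) (hK x₀)
  have hTn : MeasurePreserving T^[n] μ μ := hT.iterate n
  have hgm : Measurable (fun x => f (T^[n] x)) := hf.comp (hTm.iterate n)
  have hgint : Integrable (fun x => f (T^[n] x)) μ := by
    refine Integrable.mono' (integrable_const K) hgm.aestronglyMeasurable ?_
    exact Filter.Eventually.of_forall fun x => by simpa [Real.norm_eq_abs] using hK _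
  have hIg : ∫ x, f (T^[n] x) ∂μ = ∫ x, f x ∂μ := by
    calc ∫ x, f (T^[n] x) ∂μ = ∫ y, f y ∂(Measure.map T^[n] μ) :=
        (integral_map hTn.measurable.aemeasurable
          (by rw [hTn.map_eq]; exact hf.aestronglyMeasurable)).symm
      _ = ∫ y, f y ∂μ := by rw [hTn.map_eq]
  have hB0 : ∫ x in B, f (T^[n] x) ∂μ = 0 := by
    have hae : ∀ᵐ x ∂μ, T^[n] x ∉ M → f (T^[n] x) = 0 :=
      hTn.quasiMeasurePreserving.ae hvanish
    have hae2 : ∀ᵐ x ∂μ.restrict B, f (T^[n] x) = 0 := by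
      rw [ae_restrict_iff' hBm]
      filter_upwards [hae] with x hx hxB
      exact hx (hxB.1 n hn1 le_rfl)
    calc ∫ x in B, f (T^[n] x) ∂μ = ∫ _x in B, (0:ℝ) ∂μ := integral_congr_ae hae2
      _ = 0 := by simp
  have hBc : ∫ x in Bᶜ, f (T^[n] x) ∂μ = ∫ x, f x ∂μ := by
    have h := integral_add_compl hBm hgint
    rw [hB0, zero_add, hIg] at h
    exact h
  have hcond : ∫ x, f (T^[n] x) ∂(ProbabilityTheory.cond μ Bᶜ)
      = (μ Bᶜ).toReal⁻¹ * ∫ x, f x ∂μ := by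
    rw [ProbabilityTheory.cond, integral_smul_measure, ENNReal.toReal_inv, hBc, smul_eq_mul]
  -- real quantities
  set I := ∫ x, f x ∂μ with hIdef
  have hIK : |I| ≤ K := by
    have h := norm_integral_le_of_norm_le_const (μ := μ) (f := f) (C := K)
      (Filter.Eventually.of_forall fun x => by simpa [Real.norm_eq_abs] using hK x)
    simpa [Real.norm_eq_abs] using h
  set b := (μ B).toReal with hbdef
  set mm := (μ (M ∩ hitSet T M n)).toReal with hmmdef
  have haeq : (μ (hitSet T M n)).toReal = b + mm := by
    rw [hbdef, hmmdef, ← ENNReal.toReal_add (measure_ne_top _ _) (measure_ne_top _ _)]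
    congr 1
    rw [hBdef, Set.inter_comm, measure_diff_add_inter _ hM]
  have hb0 : 0 ≤ b := ENNReal.toReal_nonneg
  have hm0 : 0 ≤ mm := ENNReal.toReal_nonneg
  have hbhalf : b ≤ 1/2 := by
    have h := ENNReal.toReal_mono (by norm_num) (le_trans hμB_le hhalf.le)
    simpa using h
  have hBc_toReal : (μ Bᶜ).toReal = 1 - b := by
    rw [measure_compl hBm (measure_ne_top _ _), measure_univ,
      ENNReal.toReal_sub_of_le prob_le_one ENNReal.one_ne_top]
    simp [hbdef]
  have ha_le : b + mm ≤ c₂ * (n:ℝ) ^ (1-α₀) := by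
    rw [← haeq]
    exact ENNReal.toReal_le_of_le_ofReal (by positivity) (hA n hn1)
  have hm_le : mm ≤ c₁ * (n:ℝ) ^ (-α₀) :=
    ENNReal.toReal_le_of_le_ofReal (by positivity) (hMA n hn1)
  -- final computation
  rw [hcond, hBc_toReal, haeq]
  have h1b : (0:ℝ) < 1 - b := by linarith
  have heq : (1-b)⁻¹ * I - I * (1 + (b + mm)) = I * (((b+mm)*b - mm)/(1-b)) := by
    field_simp
    ring
  rw [heq, abs_mul, abs_div, abs_of_pos h1b]
  have habs : |(b+mm)*b - mm| ≤ (b+mm)*b + mm := by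
    refine (abs_sub _ _).trans ?_
    rw [abs_of_nonneg (by positivity), abs_of_nonneg hm0]
  have hinv : (1-b)⁻¹ ≤ 2 := by
    rw [show (2:ℝ) = (1/2)⁻¹ by norm_num]
    exact one_div (2:ℝ) ▸ inv_anti₀ (by norm_num) (by linarith)
  have hnb1 : (n:ℝ) ^ (-(2*α₀-2)) ≤ (n:ℝ) ^ (-β) :=
    Real.rpow_le_rpow_of_exponent_le hn1'
      (by have := min_le_right α₀ (2*α₀-2); rw [hβ]; linarith)
  have hnb2 : (n:ℝ) ^ (-α₀) ≤ (n:ℝ) ^ (-β) :=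
    Real.rpow_le_rpow_of_exponent_le hn1'
      (by have := min_le_left α₀ (2*α₀-2); rw [hβ]; linarith)
  have hsq : (c₂ * (n:ℝ)^(1-α₀))^2 = c₂^2 * (n:ℝ) ^ (-(2*α₀-2)) := by
    rw [mul_pow]
    congr 1
    rw [← Real.rpow_natCast ((n:ℝ)^(1-α₀)) 2, ← Real.rpow_mul (Nat.cast_nonneg n),
      show ((1:ℝ)-α₀)*((2:ℕ):ℝ) = -(2*α₀-2) by push_cast; ring]
  have hab : (b+mm)*b ≤ c₂^2 * (n:ℝ) ^ (-(2*α₀-2)) := by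
    rw [← hsq]
    calc (b+mm)*b ≤ (b+mm)*(b+mm) := by nlinarith
      _ = (b+mm)^2 := by ring
      _ ≤ (c₂ * (n:ℝ)^(1-α₀))^2 := by
          apply pow_le_pow_left₀ (by positivity) ha_le
  have hfrac : |(b+mm)*b - mm|/(1-b) ≤ 2*c₂^2*(n:ℝ)^(-β) + 2*c₁*(n:ℝ)^(-β) := by
    rw [div_eq_mul_inv]
    calc |(b+mm)*b - mm| * (1-b)⁻¹ ≤ ((b+mm)*b + mm) * 2 := by
          apply mul_le_mul habs hinv (by positivity) (by positivity)
      _ ≤ (c₂^2 * (n:ℝ)^(-(2*α₀-2)) + c₁ * (n:ℝ)^(-α₀)) * 2 := by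
          have h := add_le_add hab hm_le
          linarith
      _ ≤ 2*c₂^2*(n:ℝ)^(-β) + 2*c₁*(n:ℝ)^(-β) := by
          have h1 : c₂^2 * (n:ℝ)^(-(2*α₀-2)) ≤ c₂^2 * (n:ℝ)^(-β) :=
            mul_le_mul_of_nonneg_left hnb1 (by positivity)
          have h2 : c₁ * (n:ℝ)^(-α₀) ≤ c₁ * (n:ℝ)^(-β) :=
            mul_le_mul_of_nonneg_left hnb2 hc₁0.le
          linarith
  calc |I| * (|(b+mm)*b - mm|/(1-b)) ≤ K * (2*c₂^2*(n:ℝ)^(-β) + 2*c₁*(n:ℝ)^(-β)) :=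
        mul_le_mul hIK hfrac (by positivity) hK0
    _ = (2*c₁ + 2*c₂^2) * K * (n:ℝ)^(-β) := by ring
end
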